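/- arXiv:0807.2028 — 3 statements merged into one kernel-verified Lean document; each statement's English description precedes it below -/
import Mathlib

section
/- Let x̄ ∈ ℝⁿ be an equilibrium of the weighted Krause model with positive weights w_1,…,w_n. If x̄ is stable with respect to the addition of a perturbing agent, then for every pair of distinct clusters a, b of x̄ with weights W_a and W_b, the following holds: either W_a = W_b and |a − b| ≥ 2, or W_a ≠ W_b and |a − b| > 1 + min(W_a, W_b)/max(W_a, W_b). Equivalently, if two distinct clusters a, b of x̄ satisfy |a − b| < 2 and |a − b| ≤ 1 + min(W_a, W_b)/max(W_a, W_b), then x̄ is not stable. -/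
open Filter

/-- One step of the weighted Krause model. -/
noncomputable def wKrauseUpdate {n : ℕ} (w : Fin n → ℝ) (x : Fin n → ℝ) :
    Fin n → ℝ := fun i =>
  (∑ j ∈ Finset.univ.filter (fun j => |x i - x j| < 1), w j * x j) /
  (∑ j ∈ Finset.univ.filter (fun j => |x i - x j| < 1), w j)

/-- Trajectory of the weighted Krause model. -/
noncomputable def wKrauseTraj {n : ℕ} (w : Fin n → ℝ) (x0 : Fin n → ℝ) (t : ℕ) :
    Fin n → ℝ := (wKrauseUpdate w)^[t] x0

/-- The weight of the cluster of `xbar` at value `c`. -/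
noncomputable def clusterWeight {n : ℕ} (w : Fin n → ℝ) (xbar : Fin n → ℝ)
    (c : ℝ) : ℝ := ∑ i ∈ Finset.univ.filter (fun i => xbar i = c), w i

/-- Limiting opinion of original agent `i` after adding a perturbing agent of
weight `δ` and initial opinion `x0` to the equilibrium `xbar`. -/
noncomputable def perturbedLimit {n : ℕ} (w : Fin n → ℝ) (xbar : Fin n → ℝ)
    (x0 δ : ℝ) (i : Fin n) : ℝ :=
  limUnder atTop (fun t => wKrauseTraj (Fin.cons δ w) (Fin.cons x0 xbar) t i.succ)

/-- The distance `Δ(x̃₀, δ)` between the original equilibrium and the perturbed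
equilibrium. -/
noncomputable def perturbDelta {n : ℕ} (w : Fin n → ℝ) (xbar : Fin n → ℝ)
    (x0 δ : ℝ) : ℝ := ∑ i, w i * |xbar i - perturbedLimit w xbar x0 δ i|

/-- Stability of an equilibrium with respect to the addition of a perturbing
agent: `sup_{x̃₀} Δ(x̃₀, δ) → 0` as `δ → 0⁺`. -/
def IsStableEquilibrium {n : ℕ} (w : Fin n → ℝ) (xbar : Fin n → ℝ) : Prop :=
  Tendsto (fun δ : ℝ => ⨆ x0 : ℝ, perturbDelta w xbar x0 δ)
    (nhdsWithin 0 (Set.Ioi 0)) (nhds 0)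


/-- An equilibrium configuration is fixed by the update. -/
lemma update_of_eqconf {m : ℕ} (w : Fin m → ℝ) (hw : ∀ i, 0 < w i)
    (x : Fin m → ℝ) (hx : ∀ i j, x i = x j ∨ 1 ≤ |x i - x j|) :
    wKrauseUpdate w x = x := by
  funext i
  have hfilt : (Finset.univ.filter (fun j => |x i - x j| < 1)) =
      Finset.univ.filter (fun j => x j = x i) := by
    ext j
    simp only [Finset.mem_filter, Finset.mem_univ, true_and]
    constructor
    · intro h
      rcases hx i j with h' | h'
      · exact h'.symm
      · linarith
    · intro h; rw [h]; simpa using one_pos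
  have hiin : i ∈ Finset.univ.filter (fun j => x j = x i) := by simp
  have hpos : 0 < ∑ j ∈ Finset.univ.filter (fun j => x j = x i), w j :=
    Finset.sum_pos (fun j _ => hw j) ⟨i, hiin⟩
  have hnum : ∑ j ∈ Finset.univ.filter (fun j => x j = x i), w j * x j =
      (∑ j ∈ Finset.univ.filter (fun j => x j = x i), w j) * x i := by
    rw [Finset.sum_mul]
    refine Finset.sum_congr rfl fun j hj => ?_
    simp only [Finset.mem_filter] at hj
    rw [hj.2]
  rw [wKrauseUpdate, hfilt, hnum, mul_comm, mul_div_assoc, div_self hpos.ne', mul_one]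

lemma traj_succ {m : ℕ} (w : Fin m → ℝ) (x : Fin m → ℝ) (t : ℕ) :
    wKrauseTraj w x (t + 1) = wKrauseUpdate w (wKrauseTraj w x t) := by
  simp [wKrauseTraj, Function.iterate_succ_apply']

lemma traj_const_of_eqconf {m : ℕ} (w : Fin m → ℝ) (hw : ∀ i, 0 < w i)
    (x : Fin m → ℝ) (T : ℕ)
    (hx : ∀ i j, wKrauseTraj w x T i = wKrauseTraj w x T j ∨
      1 ≤ |wKrauseTraj w x T i - wKrauseTraj w x T j|) :
    ∀ t, T ≤ t → wKrauseTraj w x t = wKrauseTraj w x T := by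
  intro t ht
  obtain ⟨s, rfl⟩ := Nat.exists_eq_add_of_le ht
  induction s with
  | zero => rfl
  | succ s ih =>
    rw [← Nat.add_assoc, traj_succ, ih (Nat.le_add_right _ _), update_of_eqconf w hw _ hx]

lemma tendsto_of_eqconf {m : ℕ} (w : Fin m → ℝ) (hw : ∀ i, 0 < w i)
    (x : Fin m → ℝ) (T : ℕ)
    (hx : ∀ i j, wKrauseTraj w x T i = wKrauseTraj w x T j ∨
      1 ≤ |wKrauseTraj w x T i - wKrauseTraj w x T j|) (i : Fin m) :
    Tendsto (fun t => wKrauseTraj w x t i) atTop (nhds (wKrauseTraj w x T i)) := by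
  apply Tendsto.congr' _ tendsto_const_nhds
  filter_upwards [eventually_ge_atTop T] with t ht
  rw [traj_const_of_eqconf w hw x T hx t ht]

/-- Reduced description of the perturbed configuration. -/
noncomputable def repr3 {n : ℕ} (xbar : Fin n → ℝ) (a b y α β : ℝ) :
    Fin (n+1) → ℝ :=
  Fin.cons y (fun i => if xbar i = a then α else if xbar i = b then β else xbar i)

@[simp] lemma repr3_zero {n : ℕ} (xbar : Fin n → ℝ) (a b y α β : ℝ) :
    repr3 xbar a b y α β 0 = y := rfl

@[simp] lemma repr3_succ {n : ℕ} (xbar : Fin n → ℝ) (a b y α β : ℝ) (i : Fin n) :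
    repr3 xbar a b y α β i.succ
      = if xbar i = a then α else if xbar i = b then β else xbar i := by
  simp [repr3]

lemma filter_sum_succ {n : ℕ} (P : Fin (n+1) → Prop) [DecidablePred P]
    (F : Fin (n+1) → ℝ) :
    ∑ j ∈ Finset.univ.filter P, F j
      = (if P 0 then F 0 else 0) + ∑ i : Fin n, if P i.succ then F i.succ else 0 := by
  rw [Finset.sum_filter, Fin.sum_univ_succ]

lemma class_inner_sum {n : ℕ} (w xbar : Fin n → ℝ) (c a b α β u v : ℝ)
    (r : Fin n → ℝ) (hab : a ≠ b)
    (hfroz : ∀ i, xbar i ≠ a → xbar i ≠ b → ¬(|c - xbar i| < 1)) :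
    ∑ i : Fin n, (if |c - (if xbar i = a then α else if xbar i = b then β else xbar i)| < 1
        then w i * (if xbar i = a then u else if xbar i = b then v else r i) else 0)
    = (if |c - α| < 1 then clusterWeight w xbar a * u else 0)
    + (if |c - β| < 1 then clusterWeight w xbar b * v else 0) := by
  have key : ∀ i : Fin n,
      (if |c - (if xbar i = a then α else if xbar i = b then β else xbar i)| < 1
        then w i * (if xbar i = a then u else if xbar i = b then v else r i) else 0)
      = (if xbar i = a then (if |c - α| < 1 then w i * u else 0) else 0)
      + (if xbar i = b then (if |c - β| < 1 then w i * v else 0) else 0) := by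
    intro i
    by_cases h1 : xbar i = a
    · have h2 : xbar i ≠ b := by rw [h1]; exact hab
      simp [h1, h2, hab, Ne.symm hab]
    · by_cases h2 : xbar i = b
      · simp [h1, h2, Ne.symm hab]
      · simp [h1, h2, hfroz i h1 h2]
  rw [Finset.sum_congr rfl (fun i _ => key i), Finset.sum_add_distrib]
  congr 1
  · rw [← Finset.sum_filter]
    split_ifs with h
    · rw [clusterWeight, Finset.sum_mul]
    · simp
  · rw [← Finset.sum_filter]
    split_ifs with h
    · rw [clusterWeight, Finset.sum_mul]
    · simp

lemma class_inner_sum' {n : ℕ} (w xbar : Fin n → ℝ) (c a b α β : ℝ) (hab : a ≠ b)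
    (hfroz : ∀ i, xbar i ≠ a → xbar i ≠ b → ¬(|c - xbar i| < 1)) :
    ∑ i : Fin n, (if |c - (if xbar i = a then α else if xbar i = b then β else xbar i)| < 1
        then w i else 0)
    = (if |c - α| < 1 then clusterWeight w xbar a else 0)
    + (if |c - β| < 1 then clusterWeight w xbar b else 0) := by
  have key : ∀ i : Fin n,
      (if |c - (if xbar i = a then α else if xbar i = b then β else xbar i)| < 1
        then w i else 0)
      = (if xbar i = a then (if |c - α| < 1 then w i else 0) else 0)
      + (if xbar i = b then (if |c - β| < 1 then w i else 0) else 0) := by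
    intro i
    by_cases h1 : xbar i = a
    · have h2 : xbar i ≠ b := by rw [h1]; exact hab
      simp [h1, h2, hab, Ne.symm hab]
    · by_cases h2 : xbar i = b
      · simp [h1, h2, Ne.symm hab]
      · simp [h1, h2, hfroz i h1 h2]
  rw [Finset.sum_congr rfl (fun i _ => key i), Finset.sum_add_distrib]
  congr 1
  · rw [← Finset.sum_filter]
    split_ifs with h
    · rfl
    · simp
  · rw [← Finset.sum_filter]
    split_ifs with h
    · rfl
    · simp

lemma step_repr3 {n : ℕ} (w xbar : Fin n → ℝ) (hw : ∀ i, 0 < w i)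
    (heq : ∀ i j, xbar i = xbar j ∨ 1 ≤ |xbar i - xbar j|)
    (δ a b y α β : ℝ) (hab : a ≠ b)
    (hfar : ∀ i, xbar i = a ∨ xbar i = b ∨ (xbar i + 1 ≤ α ∨ β + 1 ≤ xbar i))
    (hαy : α ≤ y) (hyβ : y ≤ β) :
    wKrauseUpdate (Fin.cons δ w) (repr3 xbar a b y α β) =
      repr3 xbar a b
        ((δ*y + (if |y - α| < 1 then clusterWeight w xbar a * α else 0)
              + (if |y - β| < 1 then clusterWeight w xbar b * β else 0)) /
         (δ + (if |y - α| < 1 then clusterWeight w xbar a else 0)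
            + (if |y - β| < 1 then clusterWeight w xbar b else 0)))
        (((if |y - α| < 1 then δ*y else 0) + clusterWeight w xbar a * α
              + (if |α - β| < 1 then clusterWeight w xbar b * β else 0)) /
         ((if |y - α| < 1 then δ else 0) + clusterWeight w xbar a
            + (if |α - β| < 1 then clusterWeight w xbar b else 0)))
        (((if |y - β| < 1 then δ*y else 0)
              + (if |α - β| < 1 then clusterWeight w xbar a * α else 0)
              + clusterWeight w xbar b * β) /
         ((if |y - β| < 1 then δ else 0)
            + (if |α - β| < 1 then clusterWeight w xbar a else 0)
            + clusterWeight w xbar b)) := by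
  have hαβ : α ≤ β := hαy.trans hyβ
  have hfrozy : ∀ i, xbar i ≠ a → xbar i ≠ b → ¬(|y - xbar i| < 1) := by
    intro i h1 h2 hlt
    rcases hfar i with h | h | h | h
    · exact h1 h
    · exact h2 h
    · have := (abs_lt.1 hlt).2; linarith
    · have := (abs_lt.1 hlt).1; linarith
  have hfrozα : ∀ i, xbar i ≠ a → xbar i ≠ b → ¬(|α - xbar i| < 1) := by
    intro i h1 h2 hlt
    rcases hfar i with h | h | h | h
    · exact h1 h
    · exact h2 h
    · have := (abs_lt.1 hlt).2; linarith
    · have := (abs_lt.1 hlt).1; linarith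
  have hfrozβ : ∀ i, xbar i ≠ a → xbar i ≠ b → ¬(|β - xbar i| < 1) := by
    intro i h1 h2 hlt
    rcases hfar i with h | h | h | h
    · exact h1 h
    · exact h2 h
    · have := (abs_lt.1 hlt).2; linarith
    · have := (abs_lt.1 hlt).1; linarith
  funext j
  refine Fin.cases ?_ ?_ j
  · -- the perturbing agent
    show wKrauseUpdate (Fin.cons δ w) (repr3 xbar a b y α β) 0 = _
    rw [wKrauseUpdate]
    rw [repr3_zero]
    rw [filter_sum_succ, filter_sum_succ]
    simp only [Fin.cons_zero, Fin.cons_succ, repr3_zero, repr3_succ, sub_self,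
      abs_zero, zero_lt_one, if_true]
    rw [class_inner_sum w xbar y a b α β α β xbar hab hfrozy,
      class_inner_sum' w xbar y a b α β hab hfrozy]
    congr 1 <;> ring
  · intro i
    by_cases h1 : xbar i = a
    · -- cluster a agent
      show wKrauseUpdate (Fin.cons δ w) (repr3 xbar a b y α β) i.succ = _
      have hval : repr3 xbar a b y α β i.succ = α := by
        rw [repr3_succ, if_pos h1]
      rw [wKrauseUpdate, hval]
      conv_rhs => rw [repr3_succ, if_pos h1]
      rw [filter_sum_succ, filter_sum_succ]
      simp only [Fin.cons_zero, Fin.cons_succ, repr3_zero, repr3_succ]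
      rw [class_inner_sum w xbar α a b α β α β xbar hab hfrozα,
        class_inner_sum' w xbar α a b α β hab hfrozα]
      simp only [sub_self, abs_zero, zero_lt_one, if_true, abs_sub_comm α y]
      congr 1 <;> ring
    · by_cases h2 : xbar i = b
      · -- cluster b agent
        show wKrauseUpdate (Fin.cons δ w) (repr3 xbar a b y α β) i.succ = _
        have hval : repr3 xbar a b y α β i.succ = β := by
          rw [repr3_succ, if_neg h1, if_pos h2]
        rw [wKrauseUpdate, hval]
        conv_rhs => rw [repr3_succ, if_neg h1, if_pos h2]
        rw [filter_sum_succ, filter_sum_succ]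
        simp only [Fin.cons_zero, Fin.cons_succ, repr3_zero, repr3_succ]
        rw [class_inner_sum w xbar β a b α β α β xbar hab hfrozβ,
          class_inner_sum' w xbar β a b α β hab hfrozβ]
        simp only [sub_self, abs_zero, zero_lt_one, if_true, abs_sub_comm β y,
          abs_sub_comm β α]
        congr 1 <;> ring
      · -- frozen agent
        show wKrauseUpdate (Fin.cons δ w) (repr3 xbar a b y α β) i.succ = _
        have hval : repr3 xbar a b y α β i.succ = xbar i := by
          rw [repr3_succ, if_neg h1, if_neg h2]
        rw [wKrauseUpdate, hval]
        conv_rhs => rw [repr3_succ, if_neg h1, if_neg h2]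
        have hfar' : xbar i + 1 ≤ α ∨ β + 1 ≤ xbar i := by
          rcases hfar i with h | h | h | h
          · exact absurd h h1
          · exact absurd h h2
          · exact Or.inl h
          · exact Or.inr h
        rw [filter_sum_succ, filter_sum_succ]
        simp only [Fin.cons_zero, Fin.cons_succ, repr3_zero, repr3_succ]
        have hP0 : ¬(|xbar i - y| < 1) := by
          intro hlt
          rcases abs_lt.1 hlt with ⟨hl, hr⟩
          rcases hfar' with h | h
          · linarith
          · linarith
        have hc1 : ¬(|xbar i - α| < 1) := by
          intro hlt
          rcases abs_lt.1 hlt with ⟨hl, hr⟩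
          rcases hfar' with h | h
          · linarith
          · linarith
        have hc2 : ¬(|xbar i - β| < 1) := by
          intro hlt
          rcases abs_lt.1 hlt with ⟨hl, hr⟩
          rcases hfar' with h | h
          · linarith
          · linarith
        have hnea : a ≠ xbar i := fun hh => h1 hh.symm
        have hneb : b ≠ xbar i := fun hh => h2 hh.symm
        have hinner : ∀ i' : Fin n,
            (if |xbar i - (if xbar i' = a then α else if xbar i' = b then β
                else xbar i')| < 1
              then w i' * (if xbar i' = a then α else if xbar i' = b then β
                else xbar i') else 0)
            = (if xbar i' = xbar i then w i' * xbar i else 0) := by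
          intro i'
          by_cases h1' : xbar i' = a
          · simp [h1', hc1, hnea]
          · by_cases h2' : xbar i' = b
            · simp [h1', h2', hc2, hneb, Ne.symm hab]
            · by_cases he : xbar i' = xbar i
              · simp [h1', h2', he, h1, h2]
              · have hge : 1 ≤ |xbar i' - xbar i| := by
                  rcases heq i' i with h' | h'
                  · exact absurd h' he
                  · exact h'
                have hnlt : ¬(|xbar i - xbar i'| < 1) := by
                  rw [abs_sub_comm]; exact not_lt.2 hge
                simp [h1', h2', hnlt, he]
        have hinner' : ∀ i' : Fin n,
            (if |xbar i - (if xbar i' = a then α else if xbar i' = b then β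
                else xbar i')| < 1
              then w i' else 0)
            = (if xbar i' = xbar i then w i' else 0) := by
          intro i'
          by_cases h1' : xbar i' = a
          · simp [h1', hc1, hnea]
          · by_cases h2' : xbar i' = b
            · simp [h1', h2', hc2, hneb, Ne.symm hab]
            · by_cases he : xbar i' = xbar i
              · simp [h1', h2', he, h1, h2]
              · have hge : 1 ≤ |xbar i' - xbar i| := by
                  rcases heq i' i with h' | h'
                  · exact absurd h' he
                  · exact h'
                have hnlt : ¬(|xbar i - xbar i'| < 1) := by
                  rw [abs_sub_comm]; exact not_lt.2 hge
                simp [h1', h2', hnlt, he]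
        rw [Finset.sum_congr rfl (fun i' _ => hinner i'),
          Finset.sum_congr rfl (fun i' _ => hinner' i'), if_neg hP0, if_neg hP0]
        rw [← Finset.sum_filter, ← Finset.sum_filter, ← Finset.sum_mul]
        have hWc : (0:ℝ) < ∑ i' ∈ Finset.univ.filter (fun i' => xbar i' = xbar i), w i' :=
          Finset.sum_pos (fun j' _ => hw j') ⟨i, by simp⟩
        rw [zero_add, zero_add, mul_comm, mul_div_assoc, div_self hWc.ne', mul_one]

section Regimes

variable {n : ℕ} (w xbar : Fin n → ℝ)

lemma abs_e1 {y α : ℝ} (h : α ≤ y) : |y - α| = y - α := abs_of_nonneg (by linarith)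
lemma abs_e2 {y β : ℝ} (h : y ≤ β) : |y - β| = β - y := by
  rw [abs_sub_comm]; exact abs_of_nonneg (by linarith)

lemma cor_R3 (hw : ∀ i, 0 < w i)
    (heq : ∀ i j, xbar i = xbar j ∨ 1 ≤ |xbar i - xbar j|)
    (δ a b y α β : ℝ) (hab : a ≠ b)
    (hfar : ∀ i, xbar i = a ∨ xbar i = b ∨ (xbar i + 1 ≤ α ∨ β + 1 ≤ xbar i))
    (hαy : α ≤ y) (hyβ : y ≤ β) (hu : y - α < 1) (hv : β - y < 1)
    (hr : 1 ≤ β - α) :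
    wKrauseUpdate (Fin.cons δ w) (repr3 xbar a b y α β) =
      repr3 xbar a b
        ((δ*y + clusterWeight w xbar a * α + clusterWeight w xbar b * β) /
          (δ + clusterWeight w xbar a + clusterWeight w xbar b))
        ((δ*y + clusterWeight w xbar a * α) / (δ + clusterWeight w xbar a))
        ((δ*y + clusterWeight w xbar b * β) / (δ + clusterWeight w xbar b)) := by
  rw [step_repr3 w xbar hw heq δ a b y α β hab hfar hαy hyβ]
  rw [abs_e1 hαy, abs_e2 hyβ, abs_e2 (hαy.trans hyβ)]
  have hr' : ¬(β - α < 1) := not_lt.2 hr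
  simp only [hu, hv, hr', if_true, if_false, add_zero, zero_add]

lemma cor_R4 (hw : ∀ i, 0 < w i)
    (heq : ∀ i j, xbar i = xbar j ∨ 1 ≤ |xbar i - xbar j|)
    (δ a b y α β : ℝ) (hab : a ≠ b)
    (hfar : ∀ i, xbar i = a ∨ xbar i = b ∨ (xbar i + 1 ≤ α ∨ β + 1 ≤ xbar i))
    (hαy : α ≤ y) (hyβ : y ≤ β) (hgap : β - α < 1) :
    wKrauseUpdate (Fin.cons δ w) (repr3 xbar a b y α β) =
      repr3 xbar a b
        ((δ*y + clusterWeight w xbar a * α + clusterWeight w xbar b * β) /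
          (δ + clusterWeight w xbar a + clusterWeight w xbar b))
        ((δ*y + clusterWeight w xbar a * α + clusterWeight w xbar b * β) /
          (δ + clusterWeight w xbar a + clusterWeight w xbar b))
        ((δ*y + clusterWeight w xbar a * α + clusterWeight w xbar b * β) /
          (δ + clusterWeight w xbar a + clusterWeight w xbar b)) := by
  have hu : y - α < 1 := by linarith
  have hv : β - y < 1 := by linarith
  rw [step_repr3 w xbar hw heq δ a b y α β hab hfar hαy hyβ]
  rw [abs_e1 hαy, abs_e2 hyβ, abs_e2 (hαy.trans hyβ)]
  simp only [hu, hv, hgap, if_true]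

lemma cor_R1 (hw : ∀ i, 0 < w i)
    (heq : ∀ i j, xbar i = xbar j ∨ 1 ≤ |xbar i - xbar j|)
    (δ a b y α β : ℝ) (hab : a ≠ b)
    (hfar : ∀ i, xbar i = a ∨ xbar i = b ∨ (xbar i + 1 ≤ α ∨ β + 1 ≤ xbar i))
    (hαy : α ≤ y) (hyβ : y ≤ β) (hu : 1 ≤ y - α) (hv : β - y < 1)
    (hWa : clusterWeight w xbar a ≠ 0) :
    wKrauseUpdate (Fin.cons δ w) (repr3 xbar a b y α β) =
      repr3 xbar a b
        ((δ*y + clusterWeight w xbar b * β) / (δ + clusterWeight w xbar b))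
        α
        ((δ*y + clusterWeight w xbar b * β) / (δ + clusterWeight w xbar b)) := by
  have hr : ¬(β - α < 1) := by push_neg; linarith
  rw [step_repr3 w xbar hw heq δ a b y α β hab hfar hαy hyβ]
  rw [abs_e1 hαy, abs_e2 hyβ, abs_e2 (hαy.trans hyβ)]
  have hu' : ¬(y - α < 1) := not_lt.2 hu
  simp only [hu', hv, hr, if_true, if_false, add_zero, zero_add]
  rw [mul_div_cancel_left₀ α hWa]

lemma cor_R2 (hw : ∀ i, 0 < w i)
    (heq : ∀ i j, xbar i = xbar j ∨ 1 ≤ |xbar i - xbar j|)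
    (δ a b y α β : ℝ) (hab : a ≠ b)
    (hfar : ∀ i, xbar i = a ∨ xbar i = b ∨ (xbar i + 1 ≤ α ∨ β + 1 ≤ xbar i))
    (hαy : α ≤ y) (hyβ : y ≤ β) (hu : y - α < 1) (hv : 1 ≤ β - y)
    (hWb : clusterWeight w xbar b ≠ 0) :
    wKrauseUpdate (Fin.cons δ w) (repr3 xbar a b y α β) =
      repr3 xbar a b
        ((δ*y + clusterWeight w xbar a * α) / (δ + clusterWeight w xbar a))
        ((δ*y + clusterWeight w xbar a * α) / (δ + clusterWeight w xbar a))
        β := by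
  have hr : ¬(β - α < 1) := by push_neg; linarith
  rw [step_repr3 w xbar hw heq δ a b y α β hab hfar hαy hyβ]
  rw [abs_e1 hαy, abs_e2 hyβ, abs_e2 (hαy.trans hyβ)]
  have hv' : ¬(β - y < 1) := not_lt.2 hv
  simp only [hu, hv', hr, if_true, if_false, add_zero, zero_add]
  rw [mul_div_cancel_left₀ β hWb]

end Regimes


section Algebra
variable {δ Wa Wb y α β : ℝ}

lemma alg1 (hδ : 0 < δ) (hWa : 0 < Wa) (hαy : α ≤ y) :
    α ≤ (δ*y + Wa*α)/(δ+Wa) := by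
  rw [le_div_iff₀ (by linarith)]
  nlinarith [mul_nonneg hδ.le (sub_nonneg.2 hαy)]

lemma alg2 (hδ : 0 < δ) (hWb : 0 < Wb) (hyβ : y ≤ β) :
    (δ*y + Wb*β)/(δ+Wb) ≤ β := by
  rw [div_le_iff₀ (by linarith)]
  nlinarith [mul_nonneg hδ.le (sub_nonneg.2 hyβ)]

lemma alg3 (hδ : 0 < δ) (hWa : 0 < Wa) (hWb : 0 < Wb) (hαy : α ≤ y) (hyβ : y ≤ β) :
    (δ*y + Wa*α)/(δ+Wa) ≤ (δ*y + Wa*α + Wb*β)/(δ+Wa+Wb) := by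
  rw [div_le_div_iff₀ (by linarith) (by linarith)]
  nlinarith [mul_nonneg (mul_nonneg hWb.le hδ.le) (sub_nonneg.2 hyβ),
    mul_nonneg (mul_nonneg hWb.le hWa.le) (sub_nonneg.2 (hαy.trans hyβ))]

lemma alg4 (hδ : 0 < δ) (hWa : 0 < Wa) (hWb : 0 < Wb) (hαy : α ≤ y) (hyβ : y ≤ β) :
    (δ*y + Wa*α + Wb*β)/(δ+Wa+Wb) ≤ (δ*y + Wb*β)/(δ+Wb) := by
  rw [div_le_div_iff₀ (by linarith) (by linarith)]
  nlinarith [mul_nonneg (mul_nonneg hWa.le hδ.le) (sub_nonneg.2 hαy),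
    mul_nonneg (mul_nonneg hWa.le hWb.le) (sub_nonneg.2 (hαy.trans hyβ))]

lemma alg5 (hδ : 0 < δ) (hWa : 0 < Wa) (hWb : 0 < Wb) (hαy : α ≤ y) (hyβ : y ≤ β)
    (hu : y - α < 1) (hWbd : Wb*(β-α) ≤ Wa + Wb) :
    (δ*y + Wa*α + Wb*β)/(δ+Wa+Wb) - α < 1 := by
  have h3 : (δ*y + Wa*α + Wb*β)/(δ+Wa+Wb) < 1 + α := by
    rw [div_lt_iff₀ (by linarith)]
    nlinarith [mul_lt_mul_of_pos_left hu hδ]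
  linarith

lemma alg6 (hδ : 0 < δ) (hWa : 0 < Wa) (hWb : 0 < Wb) (hαy : α ≤ y) (hyβ : y ≤ β)
    (hv : β - y < 1) (hWad : Wa*(β-α) ≤ Wa + Wb) :
    β - (δ*y + Wa*α + Wb*β)/(δ+Wa+Wb) < 1 := by
  have h3 : β - 1 < (δ*y + Wa*α + Wb*β)/(δ+Wa+Wb) := by
    rw [lt_div_iff₀ (by linarith)]
    nlinarith [mul_lt_mul_of_pos_left hv hδ]
  linarith

lemma alg7 {M : ℝ} (hδ : 0 < δ) (hWa : 0 < Wa) (hWb : 0 < Wb)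
    (hαy : α ≤ y) (hyβ : y ≤ β) (hM : 0 < M) (hWaM : Wa ≤ M) (hWbM : Wb ≤ M) :
    (δ*y + Wb*β)/(δ+Wb) - (δ*y + Wa*α)/(δ+Wa) ≤ (β - α) * (M/(M+δ)) := by
  have hA : (0:ℝ) < δ + Wa := by linarith
  have hB : (0:ℝ) < δ + Wb := by linarith
  have hMδ : (0:ℝ) < M + δ := by linarith
  have e1 : (δ*y + Wa*α)/(δ+Wa) - α = δ*(y-α)/(δ+Wa) := by
    field_simp; ring
  have e2 : β - (δ*y + Wb*β)/(δ+Wb) = δ*(β-y)/(δ+Wb) := by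
    field_simp; ring
  have f1 : δ*(y-α)/(M+δ) ≤ δ*(y-α)/(δ+Wa) := by
    rw [div_le_div_iff₀ hMδ hA]
    exact mul_le_mul_of_nonneg_left (by linarith)
      (mul_nonneg hδ.le (sub_nonneg.2 hαy))
  have f2 : δ*(β-y)/(M+δ) ≤ δ*(β-y)/(δ+Wb) := by
    rw [div_le_div_iff₀ hMδ hB]
    exact mul_le_mul_of_nonneg_left (by linarith)
      (mul_nonneg hδ.le (sub_nonneg.2 hyβ))
  have f3 : δ*(y-α)/(M+δ) + δ*(β-y)/(M+δ) = δ*(β-α)/(M+δ) := by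
    field_simp; ring
  have f4 : (β-α) - δ*(β-α)/(M+δ) = (β-α) * (M/(M+δ)) := by
    field_simp; ring
  linarith

lemma alg8 (hδ : 0 < δ) (hWa : 0 < Wa) (hWb : 0 < Wb) (hαy : α ≤ y) (hyβ : y ≤ β) :
    α ≤ (δ*y + Wa*α + Wb*β)/(δ+Wa+Wb) ∧ (δ*y + Wa*α + Wb*β)/(δ+Wa+Wb) ≤ β :=
  ⟨le_trans (alg1 hδ hWa hαy) (alg3 hδ hWa hWb hαy hyβ),
   le_trans (alg4 hδ hWa hWb hαy hyβ) (alg2 hδ hWb hyβ)⟩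

lemma alg9 (hδ : 0 < δ) (hWb : 0 < Wb) (hyβ : y ≤ β) :
    y ≤ (δ*y + Wb*β)/(δ+Wb) := by
  rw [le_div_iff₀ (by linarith)]
  nlinarith [mul_nonneg hWb.le (sub_nonneg.2 hyβ)]

lemma alg10 (hδ : 0 < δ) (hWa : 0 < Wa) (hαy : α ≤ y) :
    (δ*y + Wa*α)/(δ+Wa) ≤ y := by
  rw [div_le_iff₀ (by linarith)]
  nlinarith [mul_nonneg hWa.le (sub_nonneg.2 hαy)]

end Algebra

lemma clusterWeight_pos {n : ℕ} (w xbar : Fin n → ℝ) (hw : ∀ i, 0 < w i)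
    {a : ℝ} (ha : ∃ i, xbar i = a) : 0 < clusterWeight w xbar a := by
  obtain ⟨i, hi⟩ := ha
  exact Finset.sum_pos (fun j _ => hw j) ⟨i, by simp [hi]⟩

lemma cons_pos {n : ℕ} (w : Fin n → ℝ) (hw : ∀ i, 0 < w i) {δ : ℝ} (hδ : 0 < δ) :
    ∀ j, 0 < (Fin.cons δ w : Fin (n+1) → ℝ) j := by
  intro j
  refine Fin.cases ?_ ?_ j
  · simpa using hδ
  · intro i; simpa using hw i

lemma repr3_init {n : ℕ} (xbar : Fin n → ℝ) (a b x0 : ℝ) :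
    (Fin.cons x0 xbar : Fin (n+1) → ℝ) = repr3 xbar a b x0 a b := by
  funext j
  refine Fin.cases rfl ?_ j
  intro i
  rw [Fin.cons_succ, repr3_succ]
  by_cases h1 : xbar i = a
  · rw [if_pos h1, h1]
  · by_cases h2 : xbar i = b
    · rw [if_neg h1, if_pos h2, h2]
    · rw [if_neg h1, if_neg h2]

lemma eqconf_repr3_merged {n : ℕ} (xbar : Fin n → ℝ)
    (heq : ∀ i j, xbar i = xbar j ∨ 1 ≤ |xbar i - xbar j|) (a b g : ℝ)
    (hfarg : ∀ i, xbar i ≠ a → xbar i ≠ b → 1 ≤ |g - xbar i|) :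
    ∀ i j, repr3 xbar a b g g g i = repr3 xbar a b g g g j ∨
      1 ≤ |repr3 xbar a b g g g i - repr3 xbar a b g g g j| := by
  have hval : ∀ j, repr3 xbar a b g g g j = g ∨
      (∃ i', repr3 xbar a b g g g j = xbar i' ∧ xbar i' ≠ a ∧ xbar i' ≠ b) := by
    intro j
    refine Fin.cases ?_ ?_ j
    · exact Or.inl rfl
    · intro i
      by_cases h1 : xbar i = a
      · exact Or.inl (by rw [repr3_succ, if_pos h1])
      · by_cases h2 : xbar i = b
        · exact Or.inl (by rw [repr3_succ, if_neg h1, if_pos h2])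
        · exact Or.inr ⟨i, by rw [repr3_succ, if_neg h1, if_neg h2], h1, h2⟩
  intro i j
  rcases hval i with hi | ⟨i', hi, hi1, hi2⟩ <;>
    rcases hval j with hj | ⟨j', hj, hj1, hj2⟩
  · exact Or.inl (by rw [hi, hj])
  · exact Or.inr (by rw [hi, hj]; exact hfarg j' hj1 hj2)
  · exact Or.inr (by rw [hi, hj, abs_sub_comm]; exact hfarg i' hi1 hi2)
  · rcases heq i' j' with h | h
    · exact Or.inl (by rw [hi, hj, h])
    · exact Or.inr (by rw [hi, hj]; exact h)

/-- Far-cluster structure for two clusters at distance < 2. -/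
lemma far_structure {n : ℕ} (xbar : Fin n → ℝ)
    (heq : ∀ i j, xbar i = xbar j ∨ 1 ≤ |xbar i - xbar j|)
    {a b : ℝ} (ha : ∃ i, xbar i = a) (hb : ∃ i, xbar i = b)
    (hab : a < b) (hd2 : b - a < 2) :
    ∀ i, xbar i = a ∨ xbar i = b ∨ (xbar i + 1 ≤ a ∨ b + 1 ≤ xbar i) := by
  intro i
  by_cases h1 : xbar i = a
  · exact Or.inl h1
  by_cases h2 : xbar i = b
  · exact Or.inr (Or.inl h2)
  right; right
  obtain ⟨ia, hia⟩ := ha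
  obtain ⟨ib, hib⟩ := hb
  have d1 : 1 ≤ |xbar i - a| := by
    rcases heq i ia with h | h
    · exact absurd (h.trans hia) h1
    · rwa [hia] at h
  have d2 : 1 ≤ |xbar i - b| := by
    rcases heq i ib with h | h
    · exact absurd (h.trans hib) h2
    · rwa [hib] at h
  rcases le_or_gt (xbar i) a with h | h
  · left
    have e1 : |xbar i - a| = a - xbar i := by
      rw [abs_sub_comm]; exact abs_of_nonneg (by linarith)
    rw [e1] at d1; linarith
  · rcases le_or_gt (xbar i) b with h' | h'
    · exfalso
      have e1 : |xbar i - a| = xbar i - a := abs_of_nonneg (by linarith)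
      have e2 : |xbar i - b| = b - xbar i := by
        rw [abs_sub_comm]; exact abs_of_nonneg (by linarith)
      rw [e1] at d1; rw [e2] at d2; linarith
    · right
      have e2 : |xbar i - b| = xbar i - b := abs_of_nonneg (by linarith)
      rw [e2] at d2; linarith

lemma partB_traj {n : ℕ} (w xbar : Fin n → ℝ) (hw : ∀ i, 0 < w i)
    (heq : ∀ i j, xbar i = xbar j ∨ 1 ≤ |xbar i - xbar j|)
    (a b : ℝ) (ha : ∃ i, xbar i = a) (hb : ∃ i, xbar i = b) (hab : a < b)
    (hd1 : 1 ≤ b - a) (hd2 : b - a < 2)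
    (hMd : max (clusterWeight w xbar a) (clusterWeight w xbar b) * (b - a)
      ≤ clusterWeight w xbar a + clusterWeight w xbar b)
    (δ : ℝ) (hδ : 0 < δ) :
    ∃ g, a ≤ g ∧ g ≤ b ∧ ∀ i : Fin n,
      Tendsto (fun t => wKrauseTraj (Fin.cons δ w) (Fin.cons ((a+b)/2) xbar) t i.succ)
        atTop (nhds (if xbar i = a then g else if xbar i = b then g else xbar i)) := by
  have hWa : 0 < clusterWeight w xbar a := clusterWeight_pos w xbar hw ha
  have hWb : 0 < clusterWeight w xbar b := clusterWeight_pos w xbar hw hb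
  obtain ⟨Wa, hWadef⟩ : ∃ x, clusterWeight w xbar a = x := ⟨_, rfl⟩
  obtain ⟨Wb, hWbdef⟩ : ∃ x, clusterWeight w xbar b = x := ⟨_, rfl⟩
  rw [hWadef] at hWa hMd
  rw [hWbdef] at hWb hMd
  obtain ⟨M, hMdef⟩ : ∃ x, max Wa Wb = x := ⟨_, rfl⟩
  rw [hMdef] at hMd
  have hWaM : Wa ≤ M := hMdef ▸ le_max_left _ _
  have hWbM : Wb ≤ M := hMdef ▸ le_max_right _ _
  have hM : 0 < M := lt_of_lt_of_le hWa hWaM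
  have hMδ : 0 < M + δ := by linarith
  have hθ0 : 0 ≤ M/(M+δ) := div_nonneg hM.le hMδ.le
  have hθ1 : M/(M+δ) < 1 := (div_lt_one hMδ).2 (by linarith)
  have hane : a ≠ b := hab.ne
  have hw' := cons_pos w hw hδ
  have hfar0 := far_structure xbar heq ha hb hab hd2
  have mkfar : ∀ {α β : ℝ}, a ≤ α → β ≤ b →
      ∀ i, xbar i = a ∨ xbar i = b ∨ (xbar i + 1 ≤ α ∨ β + 1 ≤ xbar i) := by
    intro α β hαa hβb i
    rcases hfar0 i with h | h | h | h
    · exact Or.inl h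
    · exact Or.inr (Or.inl h)
    · exact Or.inr (Or.inr (Or.inl (by linarith)))
    · exact Or.inr (Or.inr (Or.inr (by linarith)))
  have merge_step : ∀ t y α β,
      wKrauseTraj (Fin.cons δ w) (Fin.cons ((a+b)/2) xbar) t = repr3 xbar a b y α β →
      a ≤ α → α ≤ y → y ≤ β → β ≤ b → β - α < 1 →
      ∃ g, a ≤ g ∧ g ≤ b ∧ ∃ s, ∀ t', s ≤ t' →
        wKrauseTraj (Fin.cons δ w) (Fin.cons ((a+b)/2) xbar) t' = repr3 xbar a b g g g := by
    intro t y α β hrep hαa hαy hyβ hβb hgap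
    have hstep : wKrauseTraj (Fin.cons δ w) (Fin.cons ((a+b)/2) xbar) (t+1) =
        repr3 xbar a b ((δ*y + Wa*α + Wb*β)/(δ + Wa + Wb))
          ((δ*y + Wa*α + Wb*β)/(δ + Wa + Wb)) ((δ*y + Wa*α + Wb*β)/(δ + Wa + Wb)) := by
      rw [traj_succ, hrep, cor_R4 w xbar hw heq δ a b y α β hane (mkfar hαa hβb) hαy hyβ hgap,
        hWadef, hWbdef]
    obtain ⟨hgα, hgβ⟩ := alg8 hδ hWa hWb hαy hyβ
    have hga : a ≤ (δ*y + Wa*α + Wb*β)/(δ + Wa + Wb) := hαa.trans hgα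
    have hgb : (δ*y + Wa*α + Wb*β)/(δ + Wa + Wb) ≤ b := hgβ.trans hβb
    have hfarg : ∀ i, xbar i ≠ a → xbar i ≠ b →
        1 ≤ |(δ*y + Wa*α + Wb*β)/(δ + Wa + Wb) - xbar i| := by
      intro i h1 h2
      rcases hfar0 i with h | h | h | h
      · exact absurd h h1
      · exact absurd h h2
      · rw [abs_of_nonneg (by linarith)]; linarith
      · rw [abs_sub_comm, abs_of_nonneg (by linarith)]; linarith
    have heqc := eqconf_repr3_merged xbar heq a b _ hfarg
    refine ⟨_, hga, hgb, t + 1, fun t' ht' => ?_⟩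
    have hcst := traj_const_of_eqconf (Fin.cons δ w) hw' (Fin.cons ((a+b)/2) xbar) (t+1)
      (by rw [hstep]; exact heqc) t' ht'
    rw [hcst, hstep]
  have main : ∀ t, (∃ y α β,
      wKrauseTraj (Fin.cons δ w) (Fin.cons ((a+b)/2) xbar) t = repr3 xbar a b y α β ∧
      a ≤ α ∧ α ≤ y ∧ y ≤ β ∧ β ≤ b ∧ y - α < 1 ∧ β - y < 1 ∧
      β - α ≤ (b - a) * (M/(M+δ))^t) ∨
      (∃ g, a ≤ g ∧ g ≤ b ∧ ∃ s, ∀ t', s ≤ t' →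
        wKrauseTraj (Fin.cons δ w) (Fin.cons ((a+b)/2) xbar) t' = repr3 xbar a b g g g) := by
    intro t
    induction t with
    | zero =>
      left
      refine ⟨(a+b)/2, a, b, ?_, le_refl _, by linarith, by linarith, le_refl _,
        by linarith, by linarith, by simp⟩
      rw [wKrauseTraj, Function.iterate_zero_apply, repr3_init]
    | succ t ih =>
      rcases ih with ⟨y, α, β, hrep, hαa, hαy, hyβ, hβb, hu, hv, hgap⟩ | hM'
      · rcases lt_or_ge (β - α) 1 with hsm | hbig
        · exact Or.inr (merge_step t y α β hrep hαa hαy hyβ hβb hsm)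
        · left
          have hstep : wKrauseTraj (Fin.cons δ w) (Fin.cons ((a+b)/2) xbar) (t+1) =
              repr3 xbar a b ((δ*y + Wa*α + Wb*β)/(δ + Wa + Wb))
                ((δ*y + Wa*α)/(δ + Wa)) ((δ*y + Wb*β)/(δ + Wb)) := by
            rw [traj_succ, hrep, cor_R3 w xbar hw heq δ a b y α β hane (mkfar hαa hβb)
              hαy hyβ hu hv hbig, hWadef, hWbdef]
          have hgapba : β - α ≤ b - a := by linarith
          have hβα0 : (0:ℝ) ≤ β - α := by linarith
          have hαα' := alg1 hδ hWa hαy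
          have hβ'β := alg2 hδ hWb hyβ
          have hα'y' := alg3 hδ hWa hWb hαy hyβ
          have hy'β' := alg4 hδ hWa hWb hαy hyβ
          have hu' : (δ*y + Wa*α + Wb*β)/(δ + Wa + Wb) - (δ*y + Wa*α)/(δ + Wa) < 1 := by
            have h5 := alg5 hδ hWa hWb hαy hyβ hu
              (by nlinarith [mul_le_mul hWbM hgapba hβα0 hM.le])
            linarith
          have hv' : (δ*y + Wb*β)/(δ + Wb) - (δ*y + Wa*α + Wb*β)/(δ + Wa + Wb) < 1 := by
            have h6 := alg6 hδ hWa hWb hαy hyβ hv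
              (by nlinarith [mul_le_mul hWaM hgapba hβα0 hM.le])
            linarith
          have hgap' := alg7 hδ hWa hWb hαy hyβ hM hWaM hWbM
          refine ⟨_, _, _, hstep, hαa.trans hαα', hα'y', hy'β', hβ'β.trans hβb,
            hu', hv', ?_⟩
          calc (δ*y + Wb*β)/(δ + Wb) - (δ*y + Wa*α)/(δ + Wa)
              ≤ (β - α) * (M/(M+δ)) := hgap'
            _ ≤ ((b-a) * (M/(M+δ))^t) * (M/(M+δ)) := mul_le_mul_of_nonneg_right hgap hθ0
            _ = (b-a) * (M/(M+δ))^(t+1) := by rw [mul_assoc, ← pow_succ]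
      · exact Or.inr hM'
  have hlim : Tendsto (fun t => (b - a) * (M/(M+δ))^t) atTop (nhds 0) := by
    have h1 := tendsto_pow_atTop_nhds_zero_of_lt_one hθ0 hθ1
    have h2 := h1.const_mul (b - a)
    simpa using h2
  obtain ⟨tstar, htstar⟩ := (hlim.eventually_lt_const one_pos).exists
  have hmerged : ∃ g, a ≤ g ∧ g ≤ b ∧ ∃ s, ∀ t', s ≤ t' →
      wKrauseTraj (Fin.cons δ w) (Fin.cons ((a+b)/2) xbar) t' = repr3 xbar a b g g g := by
    rcases main tstar with ⟨y, α, β, hrep, hαa, hαy, hyβ, hβb, hu, hv, hgap⟩ | hM'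
    · exact merge_step tstar y α β hrep hαa hαy hyβ hβb (lt_of_le_of_lt hgap htstar)
    · exact hM'
  obtain ⟨g, hga, hgb, s, hconst⟩ := hmerged
  refine ⟨g, hga, hgb, fun i => ?_⟩
  have hev : ∀ᶠ t in atTop,
      wKrauseTraj (Fin.cons δ w) (Fin.cons ((a+b)/2) xbar) t i.succ =
      (if xbar i = a then g else if xbar i = b then g else xbar i) := by
    filter_upwards [eventually_ge_atTop s] with t ht
    rw [hconst t ht, repr3_succ]
  exact tendsto_const_nhds.congr' (hev.mono fun t h => h.symm)

/-- General equilibrium check for a reduced configuration. -/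
lemma eqconf_repr3 {n : ℕ} (xbar : Fin n → ℝ)
    (heq : ∀ i j, xbar i = xbar j ∨ 1 ≤ |xbar i - xbar j|) (a b y α β : ℝ)
    (hyα : y = α ∨ 1 ≤ |y - α|) (hyβ : y = β ∨ 1 ≤ |y - β|)
    (hαβ : α = β ∨ 1 ≤ |α - β|)
    (hfy : ∀ i, xbar i ≠ a → xbar i ≠ b → 1 ≤ |y - xbar i|)
    (hfα : ∀ i, xbar i ≠ a → xbar i ≠ b → 1 ≤ |α - xbar i|)
    (hfβ : ∀ i, xbar i ≠ a → xbar i ≠ b → 1 ≤ |β - xbar i|) :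
    ∀ i j, repr3 xbar a b y α β i = repr3 xbar a b y α β j ∨
      1 ≤ |repr3 xbar a b y α β i - repr3 xbar a b y α β j| := by
  have sym : ∀ u v : ℝ, (u = v ∨ 1 ≤ |u - v|) → (v = u ∨ 1 ≤ |v - u|) := by
    intro u v h
    rcases h with h | h
    · exact Or.inl h.symm
    · exact Or.inr (by rwa [abs_sub_comm])
  have hval : ∀ j, (repr3 xbar a b y α β j = y ∨ repr3 xbar a b y α β j = α ∨
      repr3 xbar a b y α β j = β) ∨
      (∃ i', repr3 xbar a b y α β j = xbar i' ∧ xbar i' ≠ a ∧ xbar i' ≠ b) := by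
    intro j
    refine Fin.cases ?_ ?_ j
    · exact Or.inl (Or.inl rfl)
    · intro i
      by_cases h1 : xbar i = a
      · exact Or.inl (Or.inr (Or.inl (by rw [repr3_succ, if_pos h1])))
      · by_cases h2 : xbar i = b
        · exact Or.inl (Or.inr (Or.inr (by rw [repr3_succ, if_neg h1, if_pos h2])))
        · exact Or.inr ⟨i, by rw [repr3_succ, if_neg h1, if_neg h2], h1, h2⟩
  have trv : ∀ u : ℝ, u = u ∨ 1 ≤ |u - u| := fun u => Or.inl rfl
  intro i j
  have key : ∀ u v : ℝ,
      (u = y ∨ u = α ∨ u = β) ∨ (∃ i', u = xbar i' ∧ xbar i' ≠ a ∧ xbar i' ≠ b) →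
      (v = y ∨ v = α ∨ v = β) ∨ (∃ j', v = xbar j' ∧ xbar j' ≠ a ∧ xbar j' ≠ b) →
      u = v ∨ 1 ≤ |u - v| := by
    intro u v hu hv
    rcases hu with (hu | hu | hu) | ⟨i', hu, hi1, hi2⟩ <;>
      rcases hv with (hv | hv | hv) | ⟨j', hv, hj1, hj2⟩ <;> subst hu <;> subst hv
    · exact trv _
    · exact hyα
    · exact hyβ
    · exact Or.inr (hfy j' hj1 hj2)
    · exact sym _ _ hyα
    · exact trv _
    · exact hαβ
    · exact Or.inr (hfα j' hj1 hj2)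
    · exact sym _ _ hyβ
    · exact sym _ _ hαβ
    · exact trv _
    · exact Or.inr (hfβ j' hj1 hj2)
    · exact sym _ _ (Or.inr (hfy i' hi1 hi2))
    · exact sym _ _ (Or.inr (hfα i' hi1 hi2))
    · exact sym _ _ (Or.inr (hfβ i' hi1 hi2))
    · exact heq i' j'
  exact key _ _ (hval i) (hval j)

lemma partA_bound {n : ℕ} (w xbar : Fin n → ℝ) (hw : ∀ i, 0 < w i)
    (heq : ∀ i j, xbar i = xbar j ∨ 1 ≤ |xbar i - xbar j|)
    (x0 δ : ℝ) (hδ : 0 < δ) :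
    ∃ L : Fin n → ℝ,
      (∀ i, Tendsto (fun t => wKrauseTraj (Fin.cons δ w) (Fin.cons x0 xbar) t i.succ)
        atTop (nhds (L i))) ∧ ∀ i, |xbar i - L i| ≤ 2 := by
  have hw' := cons_pos w hw hδ
  have h0 : wKrauseTraj (Fin.cons δ w) (Fin.cons x0 xbar) 0 = Fin.cons x0 xbar := by
    rw [wKrauseTraj, Function.iterate_zero_apply]
  have settle : ∀ T : ℕ,
      (∀ i j, wKrauseTraj (Fin.cons δ w) (Fin.cons x0 xbar) T i =
          wKrauseTraj (Fin.cons δ w) (Fin.cons x0 xbar) T j ∨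
        1 ≤ |wKrauseTraj (Fin.cons δ w) (Fin.cons x0 xbar) T i -
          wKrauseTraj (Fin.cons δ w) (Fin.cons x0 xbar) T j|) →
      (∀ i : Fin n, |xbar i - wKrauseTraj (Fin.cons δ w) (Fin.cons x0 xbar) T i.succ| ≤ 2) →
      ∃ L : Fin n → ℝ,
        (∀ i, Tendsto (fun t => wKrauseTraj (Fin.cons δ w) (Fin.cons x0 xbar) t i.succ)
          atTop (nhds (L i))) ∧ ∀ i, |xbar i - L i| ≤ 2 := by
    intro T hT hbd
    exact ⟨fun i => wKrauseTraj (Fin.cons δ w) (Fin.cons x0 xbar) T i.succ,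
      fun i => tendsto_of_eqconf _ hw' _ T hT i.succ, hbd⟩
  by_cases hA0 : ∀ j : Fin n, 1 ≤ |x0 - xbar j|
  · -- isolated perturbing agent
    refine settle 0 ?_ ?_
    · rw [h0]
      have hcval : ∀ j : Fin (n+1), (Fin.cons x0 xbar : Fin (n+1) → ℝ) j = x0 ∨
          ∃ i', (Fin.cons x0 xbar : Fin (n+1) → ℝ) j = xbar i' := by
        intro j
        refine Fin.cases (Or.inl rfl) (fun i => Or.inr ⟨i, by simp⟩) j
      intro i j
      rcases hcval i with hi | ⟨i', hi⟩ <;> rcases hcval j with hj | ⟨j', hj⟩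
      · exact Or.inl (by rw [hi, hj])
      · exact Or.inr (by rw [hi, hj]; exact hA0 j')
      · exact Or.inr (by rw [hi, hj, abs_sub_comm]; exact hA0 i')
      · rw [hi, hj]; exact heq i' j'
    · intro i
      rw [h0, Fin.cons_succ, sub_self, abs_zero]
      norm_num
  push_neg at hA0
  obtain ⟨i0, hi0⟩ := hA0
  have hfin : (Set.range xbar).Finite := Set.finite_range xbar
  obtain ⟨d, hd⟩ := hfin.infinite_compl.nonempty
  have hdn : ∀ j, xbar j ≠ d := fun j h => hd ⟨j, h⟩
  have hWc : 0 < clusterWeight w xbar (xbar i0) :=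
    clusterWeight_pos w xbar hw ⟨i0, rfl⟩
  have hWd : clusterWeight w xbar d = 0 := by
    rw [clusterWeight, Finset.filter_eq_empty_iff.2 (fun j _ => hdn j),
      Finset.sum_empty]
  by_cases hA1 : ∀ j : Fin n, xbar j = xbar i0 ∨ 1 ≤ |x0 - xbar j|
  · -- exactly one visible cluster
    rcases le_or_gt (xbar i0) x0 with hcx | hcx
    · have habs : x0 - xbar i0 < 1 := (abs_lt.1 hi0).2
      have hne : xbar i0 ≠ d := hdn i0
      have hrep0 : (Fin.cons x0 xbar : Fin (n+1) → ℝ) =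
          repr3 xbar (xbar i0) d x0 (xbar i0) x0 := by
        funext j
        refine Fin.cases rfl ?_ j
        intro i
        rw [Fin.cons_succ, repr3_succ]
        by_cases hj : xbar i = xbar i0
        · rw [if_pos hj, hj]
        · rw [if_neg hj, if_neg (hdn i)]
      have hfar : ∀ j, xbar j = xbar i0 ∨ xbar j = d ∨
          (xbar j + 1 ≤ xbar i0 ∨ x0 + 1 ≤ xbar j) := by
        intro j
        by_cases hj : xbar j = xbar i0
        · exact Or.inl hj
        right; right
        have h1 : 1 ≤ |x0 - xbar j| := (hA1 j).resolve_left hj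
        have h2 : 1 ≤ |xbar j - xbar i0| := by
          rcases heq j i0 with h | h
          · exact absurd h hj
          · exact h
        rcases le_or_gt (xbar j) (xbar i0) with h | h
        · left
          rw [abs_sub_comm, abs_of_nonneg (by linarith)] at h2
          linarith
        · right
          rcases le_or_gt (xbar j) x0 with hx | hx
          · exfalso
            rw [abs_of_nonneg (by linarith)] at h1
            rw [abs_of_nonneg (by linarith)] at h2
            linarith
          · rw [abs_sub_comm, abs_of_nonneg (by linarith)] at h1
            linarith
      have hstep : wKrauseTraj (Fin.cons δ w) (Fin.cons x0 xbar) 1 =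
          repr3 xbar (xbar i0) d
            ((δ*x0 + clusterWeight w xbar (xbar i0) * (xbar i0))/(δ + clusterWeight w xbar (xbar i0)))
            ((δ*x0 + clusterWeight w xbar (xbar i0) * (xbar i0))/(δ + clusterWeight w xbar (xbar i0)))
            ((δ*x0 + clusterWeight w xbar (xbar i0) * (xbar i0))/(δ + clusterWeight w xbar (xbar i0))) := by
        have hc := cor_R4 w xbar hw heq δ (xbar i0) d x0 (xbar i0) x0 hne hfar hcx
          (le_refl x0) (by linarith)
        rw [hWd] at hc
        simp only [zero_mul, add_zero] at hc
        rw [show wKrauseTraj (Fin.cons δ w) (Fin.cons x0 xbar) 1 =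
            wKrauseUpdate (Fin.cons δ w) (wKrauseTraj (Fin.cons δ w) (Fin.cons x0 xbar) 0)
          from traj_succ _ _ 0, h0, hrep0, hc]
      have hg1 : xbar i0 ≤ (δ*x0 + clusterWeight w xbar (xbar i0) * (xbar i0))/(δ + clusterWeight w xbar (xbar i0)) :=
        alg1 hδ hWc hcx
      have hg2 : (δ*x0 + clusterWeight w xbar (xbar i0) * (xbar i0))/(δ + clusterWeight w xbar (xbar i0)) ≤ x0 :=
        alg10 hδ hWc hcx
      have hfarg : ∀ j, xbar j ≠ xbar i0 → xbar j ≠ d →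
          1 ≤ |(δ*x0 + clusterWeight w xbar (xbar i0) * (xbar i0))/(δ + clusterWeight w xbar (xbar i0)) - xbar j| := by
        intro j hj1 hj2
        rcases hfar j with h | h | h | h
        · exact absurd h hj1
        · exact absurd h hj2
        · rw [abs_of_nonneg (by linarith)]; linarith
        · rw [abs_sub_comm, abs_of_nonneg (by linarith)]; linarith
      have heqc := eqconf_repr3_merged xbar heq (xbar i0) d _ hfarg
      refine settle 1 (by rw [hstep]; exact heqc) ?_
      intro i
      rw [hstep, repr3_succ]
      by_cases hj : xbar i = xbar i0
      · rw [if_pos hj, hj, abs_sub_comm, abs_of_nonneg (by linarith)]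
        linarith
      · rw [if_neg hj, if_neg (hdn i), sub_self, abs_zero]
        norm_num
    · have habs : xbar i0 - x0 < 1 := by
        have := (abs_lt.1 hi0).1; linarith
      have hne : d ≠ xbar i0 := (hdn i0).symm
      have hrep0 : (Fin.cons x0 xbar : Fin (n+1) → ℝ) =
          repr3 xbar d (xbar i0) x0 x0 (xbar i0) := by
        funext j
        refine Fin.cases rfl ?_ j
        intro i
        rw [Fin.cons_succ, repr3_succ]
        by_cases hj : xbar i = xbar i0
        · rw [if_neg (hdn i), if_pos hj, hj]
        · rw [if_neg (hdn i), if_neg hj]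
      have hfar : ∀ j, xbar j = d ∨ xbar j = xbar i0 ∨
          (xbar j + 1 ≤ x0 ∨ xbar i0 + 1 ≤ xbar j) := by
        intro j
        by_cases hj : xbar j = xbar i0
        · exact Or.inr (Or.inl hj)
        right; right
        have h1 : 1 ≤ |x0 - xbar j| := (hA1 j).resolve_left hj
        have h2 : 1 ≤ |xbar j - xbar i0| := by
          rcases heq j i0 with h | h
          · exact absurd h hj
          · exact h
        rcases le_or_gt (xbar j) x0 with h | h
        · left
          rw [abs_of_nonneg (by linarith)] at h1
          linarith
        · right
          rcases le_or_gt (xbar j) (xbar i0) with hx | hx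
          · exfalso
            rw [abs_sub_comm, abs_of_nonneg (by linarith)] at h1
            rw [abs_sub_comm, abs_of_nonneg (by linarith)] at h2
            linarith
          · rw [abs_of_nonneg (by linarith)] at h2
            linarith
      have hstep : wKrauseTraj (Fin.cons δ w) (Fin.cons x0 xbar) 1 =
          repr3 xbar d (xbar i0)
            ((δ*x0 + clusterWeight w xbar (xbar i0) * (xbar i0))/(δ + clusterWeight w xbar (xbar i0)))
            ((δ*x0 + clusterWeight w xbar (xbar i0) * (xbar i0))/(δ + clusterWeight w xbar (xbar i0)))
            ((δ*x0 + clusterWeight w xbar (xbar i0) * (xbar i0))/(δ + clusterWeight w xbar (xbar i0))) := by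
        have hc := cor_R4 w xbar hw heq δ d (xbar i0) x0 x0 (xbar i0) hne hfar
          (le_refl x0) hcx.le (by linarith)
        rw [hWd] at hc
        simp only [zero_mul, add_zero, zero_add] at hc
        rw [show wKrauseTraj (Fin.cons δ w) (Fin.cons x0 xbar) 1 =
            wKrauseUpdate (Fin.cons δ w) (wKrauseTraj (Fin.cons δ w) (Fin.cons x0 xbar) 0)
          from traj_succ _ _ 0, h0, hrep0, hc]
      have hg1 : x0 ≤ (δ*x0 + clusterWeight w xbar (xbar i0) * (xbar i0))/(δ + clusterWeight w xbar (xbar i0)) :=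
        alg9 hδ hWc hcx.le
      have hg2 : (δ*x0 + clusterWeight w xbar (xbar i0) * (xbar i0))/(δ + clusterWeight w xbar (xbar i0)) ≤ xbar i0 :=
        alg2 hδ hWc hcx.le
      have hfarg : ∀ j, xbar j ≠ d → xbar j ≠ xbar i0 →
          1 ≤ |(δ*x0 + clusterWeight w xbar (xbar i0) * (xbar i0))/(δ + clusterWeight w xbar (xbar i0)) - xbar j| := by
        intro j hj1 hj2
        rcases hfar j with h | h | h | h
        · exact absurd h hj1
        · exact absurd h hj2
        · rw [abs_of_nonneg (by linarith)]; linarith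
        · rw [abs_sub_comm, abs_of_nonneg (by linarith)]; linarith
      have heqc := eqconf_repr3_merged xbar heq d (xbar i0) _ hfarg
      refine settle 1 (by rw [hstep]; exact heqc) ?_
      intro i
      rw [hstep, repr3_succ]
      by_cases hj : xbar i = xbar i0
      · rw [if_neg (hdn i), if_pos hj, hj, abs_of_nonneg (by linarith)]
        linarith
      · rw [if_neg (hdn i), if_neg hj, sub_self, abs_zero]
        norm_num
  · -- two visible clusters
    push_neg at hA1
    obtain ⟨j0, hj0ne, hj0lt⟩ := hA1
    obtain ⟨ia, ib, hlt, hxa, hxb⟩ : ∃ ia ib, xbar ia < xbar ib ∧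
        |x0 - xbar ia| < 1 ∧ |x0 - xbar ib| < 1 := by
      rcases lt_or_gt_of_ne hj0ne with h | h
      · exact ⟨j0, i0, h, hj0lt, hi0⟩
      · exact ⟨i0, j0, h, hi0, hj0lt⟩
    have hane : xbar ia ≠ xbar ib := hlt.ne
    have hgap1 : 1 ≤ xbar ib - xbar ia := by
      have h2 : 1 ≤ |xbar ib - xbar ia| := by
        rcases heq ib ia with h | h
        · exact absurd h hlt.ne'
        · exact h
      rwa [abs_of_nonneg (by linarith)] at h2
    have hu0 : x0 - xbar ia < 1 := (abs_lt.1 hxa).2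
    have hv0 : xbar ib - x0 < 1 := by have := (abs_lt.1 hxb).1; linarith
    have hgap2 : xbar ib - xbar ia < 2 := by linarith
    have hx1 : xbar ia ≤ x0 := by
      by_contra h
      push_neg at h
      linarith
    have hx2 : x0 ≤ xbar ib := by
      by_contra h
      push_neg at h
      linarith
    have hfar0 := far_structure xbar heq ⟨ia, rfl⟩ ⟨ib, rfl⟩ hlt hgap2
    have mkfar : ∀ {α β : ℝ}, xbar ia ≤ α → β ≤ xbar ib →
        ∀ i, xbar i = xbar ia ∨ xbar i = xbar ib ∨
          (xbar i + 1 ≤ α ∨ β + 1 ≤ xbar i) := by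
      intro α β hαa hβb i
      rcases hfar0 i with h | h | h | h
      · exact Or.inl h
      · exact Or.inr (Or.inl h)
      · exact Or.inr (Or.inr (Or.inl (by linarith)))
      · exact Or.inr (Or.inr (Or.inr (by linarith)))
    have hWa : 0 < clusterWeight w xbar (xbar ia) := clusterWeight_pos w xbar hw ⟨ia, rfl⟩
    have hWb : 0 < clusterWeight w xbar (xbar ib) := clusterWeight_pos w xbar hw ⟨ib, rfl⟩
    obtain ⟨Wa, hWadef⟩ : ∃ x, clusterWeight w xbar (xbar ia) = x := ⟨_, rfl⟩
    obtain ⟨Wb, hWbdef⟩ : ∃ x, clusterWeight w xbar (xbar ib) = x := ⟨_, rfl⟩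
    rw [hWadef] at hWa
    rw [hWbdef] at hWb
    obtain ⟨M, hMdef⟩ : ∃ x, max Wa Wb = x := ⟨_, rfl⟩
    have hWaM : Wa ≤ M := hMdef ▸ le_max_left _ _
    have hWbM : Wb ≤ M := hMdef ▸ le_max_right _ _
    have hM : 0 < M := lt_of_lt_of_le hWa hWaM
    have hMδ : 0 < M + δ := by linarith
    have hθ0 : 0 ≤ M/(M+δ) := div_nonneg hM.le hMδ.le
    have hθ1 : M/(M+δ) < 1 := (div_lt_one hMδ).2 (by linarith)
    -- far-from-g lemma template
    have mkfarg : ∀ {v : ℝ}, xbar ia ≤ v → v ≤ xbar ib →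
        ∀ j, xbar j ≠ xbar ia → xbar j ≠ xbar ib → 1 ≤ |v - xbar j| := by
      intro v hv1 hv2 j hj1 hj2
      rcases hfar0 j with h | h | h | h
      · exact absurd h hj1
      · exact absurd h hj2
      · rw [abs_of_nonneg (by linarith)]; linarith
      · rw [abs_sub_comm, abs_of_nonneg (by linarith)]; linarith
    have main : ∀ t, (∃ y α β,
        wKrauseTraj (Fin.cons δ w) (Fin.cons x0 xbar) t = repr3 xbar (xbar ia) (xbar ib) y α β ∧
        xbar ia ≤ α ∧ α ≤ y ∧ y ≤ β ∧ β ≤ xbar ib ∧ 1 ≤ β - α ∧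
        β - α ≤ (xbar ib - xbar ia) * (M/(M+δ))^t) ∨
        (∃ T, (∀ i j, wKrauseTraj (Fin.cons δ w) (Fin.cons x0 xbar) T i =
            wKrauseTraj (Fin.cons δ w) (Fin.cons x0 xbar) T j ∨
          1 ≤ |wKrauseTraj (Fin.cons δ w) (Fin.cons x0 xbar) T i -
            wKrauseTraj (Fin.cons δ w) (Fin.cons x0 xbar) T j|) ∧
          (∀ i : Fin n, |xbar i - wKrauseTraj (Fin.cons δ w) (Fin.cons x0 xbar) T i.succ| ≤ 2)) := by
      intro t
      induction t with
      | zero =>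
        left
        refine ⟨x0, xbar ia, xbar ib, ?_, le_refl _, hx1, hx2, le_refl _, hgap1, by simp⟩
        rw [h0, repr3_init]
      | succ t ih =>
        rcases ih with ⟨y, α, β, hrep, hαa, hαy, hyβ, hβb, hbig, hgap⟩ | hset
        · rcases lt_or_ge (y - α) 1 with hu | hu <;> rcases lt_or_ge (β - y) 1 with hv | hv
          · -- R3 regime
            have hstep : wKrauseTraj (Fin.cons δ w) (Fin.cons x0 xbar) (t+1) =
                repr3 xbar (xbar ia) (xbar ib) ((δ*y + Wa*α + Wb*β)/(δ + Wa + Wb))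
                  ((δ*y + Wa*α)/(δ + Wa)) ((δ*y + Wb*β)/(δ + Wb)) := by
              rw [traj_succ, hrep, cor_R3 w xbar hw heq δ (xbar ia) (xbar ib) y α β hane
                (mkfar hαa hβb) hαy hyβ hu hv hbig, hWadef, hWbdef]
            have hαα' := alg1 hδ hWa hαy
            have hβ'β := alg2 hδ hWb hyβ
            have hα'y' := alg3 hδ hWa hWb hαy hyβ
            have hy'β' := alg4 hδ hWa hWb hαy hyβ
            have hgap' : (δ*y + Wb*β)/(δ + Wb) - (δ*y + Wa*α)/(δ + Wa) ≤
                (xbar ib - xbar ia) * (M/(M+δ))^(t+1) := by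
              calc (δ*y + Wb*β)/(δ + Wb) - (δ*y + Wa*α)/(δ + Wa)
                  ≤ (β - α) * (M/(M+δ)) := alg7 hδ hWa hWb hαy hyβ hM hWaM hWbM
                _ ≤ ((xbar ib - xbar ia) * (M/(M+δ))^t) * (M/(M+δ)) :=
                    mul_le_mul_of_nonneg_right hgap hθ0
                _ = (xbar ib - xbar ia) * (M/(M+δ))^(t+1) := by rw [mul_assoc, ← pow_succ]
            rcases le_or_gt 1 ((δ*y + Wb*β)/(δ + Wb) - (δ*y + Wa*α)/(δ + Wa)) with hbig' | hsm'
            · left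
              exact ⟨_, _, _, hstep, hαa.trans hαα', hα'y', hy'β', hβ'β.trans hβb,
                hbig', hgap'⟩
            · -- next step merges
              right
              have hstep2 : wKrauseTraj (Fin.cons δ w) (Fin.cons x0 xbar) (t+2) =
                  repr3 xbar (xbar ia) (xbar ib)
                    ((δ*((δ*y + Wa*α + Wb*β)/(δ + Wa + Wb)) + Wa*((δ*y + Wa*α)/(δ + Wa)) + Wb*((δ*y + Wb*β)/(δ + Wb)))/(δ + Wa + Wb))
                    ((δ*((δ*y + Wa*α + Wb*β)/(δ + Wa + Wb)) + Wa*((δ*y + Wa*α)/(δ + Wa)) + Wb*((δ*y + Wb*β)/(δ + Wb)))/(δ + Wa + Wb))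
                    ((δ*((δ*y + Wa*α + Wb*β)/(δ + Wa + Wb)) + Wa*((δ*y + Wa*α)/(δ + Wa)) + Wb*((δ*y + Wb*β)/(δ + Wb)))/(δ + Wa + Wb)) := by
                rw [show t+2 = (t+1)+1 from rfl, traj_succ, hstep,
                  cor_R4 w xbar hw heq δ (xbar ia) (xbar ib) _ _ _ hane
                  (mkfar (hαa.trans hαα') (hβ'β.trans hβb)) hα'y' hy'β' hsm', hWadef, hWbdef]
              obtain ⟨hg1, hg2⟩ := alg8 hδ hWa hWb hα'y' hy'β'
              have hga : xbar ia ≤ (δ*((δ*y + Wa*α + Wb*β)/(δ + Wa + Wb)) + Wa*((δ*y + Wa*α)/(δ + Wa)) + Wb*((δ*y + Wb*β)/(δ + Wb)))/(δ + Wa + Wb) :=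
                le_trans (hαa.trans hαα') hg1
              have hgb : (δ*((δ*y + Wa*α + Wb*β)/(δ + Wa + Wb)) + Wa*((δ*y + Wa*α)/(δ + Wa)) + Wb*((δ*y + Wb*β)/(δ + Wb)))/(δ + Wa + Wb) ≤ xbar ib :=
                le_trans hg2 (hβ'β.trans hβb)
              have heqc := eqconf_repr3_merged xbar heq (xbar ia) (xbar ib) _
                (mkfarg hga hgb)
              refine ⟨t+2, by rw [hstep2]; exact heqc, ?_⟩
              intro i
              rw [hstep2, repr3_succ]
              by_cases hj1 : xbar i = xbar ia
              · rw [if_pos hj1, hj1, abs_sub_comm, abs_of_nonneg (by linarith)]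
                linarith
              · by_cases hj2 : xbar i = xbar ib
                · rw [if_neg hj1, if_pos hj2, hj2, abs_of_nonneg (by linarith)]
                  linarith
                · rw [if_neg hj1, if_neg hj2, sub_self, abs_zero]; norm_num
          · -- R2 regime: y sticks to cluster a, b-side far
            right
            have hstep : wKrauseTraj (Fin.cons δ w) (Fin.cons x0 xbar) (t+1) =
                repr3 xbar (xbar ia) (xbar ib) ((δ*y + Wa*α)/(δ + Wa))
                  ((δ*y + Wa*α)/(δ + Wa)) β := by
              rw [traj_succ, hrep, cor_R2 w xbar hw heq δ (xbar ia) (xbar ib) y α β hane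
                (mkfar hαa hβb) hαy hyβ hu hv (by rw [hWbdef]; exact hWb.ne'), hWadef]
            have hp1 := alg1 hδ hWa hαy
            have hp2 := alg10 hδ hWa hαy
            have hdist : 1 ≤ |(δ*y + Wa*α)/(δ + Wa) - β| := by
              rw [abs_sub_comm, abs_of_nonneg (by linarith)]; linarith
            have heqc := eqconf_repr3 xbar heq (xbar ia) (xbar ib) _ _ β
              (Or.inl rfl) (Or.inr hdist) (Or.inr hdist)
              (mkfarg (hαa.trans hp1) (by linarith))
              (mkfarg (hαa.trans hp1) (by linarith))
              (mkfarg (by linarith) hβb)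
            refine ⟨t+1, by rw [hstep]; exact heqc, ?_⟩
            intro i
            rw [hstep, repr3_succ]
            by_cases hj1 : xbar i = xbar ia
            · rw [if_pos hj1, hj1, abs_sub_comm, abs_of_nonneg (by linarith)]
              linarith
            · by_cases hj2 : xbar i = xbar ib
              · rw [if_neg hj1, if_pos hj2, hj2, abs_of_nonneg (by linarith)]
                linarith
              · rw [if_neg hj1, if_neg hj2, sub_self, abs_zero]; norm_num
          · -- R1 regime: y sticks to cluster b, a-side far
            right
            have hstep : wKrauseTraj (Fin.cons δ w) (Fin.cons x0 xbar) (t+1) =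
                repr3 xbar (xbar ia) (xbar ib) ((δ*y + Wb*β)/(δ + Wb))
                  α ((δ*y + Wb*β)/(δ + Wb)) := by
              rw [traj_succ, hrep, cor_R1 w xbar hw heq δ (xbar ia) (xbar ib) y α β hane
                (mkfar hαa hβb) hαy hyβ hu hv (by rw [hWadef]; exact hWa.ne'), hWbdef]
            have hp1 := alg9 hδ hWb hyβ
            have hp2 := alg2 hδ hWb hyβ
            have hdist : 1 ≤ |(δ*y + Wb*β)/(δ + Wb) - α| := by
              rw [abs_of_nonneg (by linarith)]; linarith
            have heqc := eqconf_repr3 xbar heq (xbar ia) (xbar ib) _ α _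
              (Or.inr hdist) (Or.inl rfl)
              (Or.inr (by rw [abs_sub_comm]; exact hdist))
              (mkfarg (by linarith) (by linarith))
              (mkfarg hαa (by linarith))
              (mkfarg (by linarith) (by linarith))
            refine ⟨t+1, by rw [hstep]; exact heqc, ?_⟩
            intro i
            rw [hstep, repr3_succ]
            by_cases hj1 : xbar i = xbar ia
            · rw [if_pos hj1, hj1, abs_sub_comm, abs_of_nonneg (by linarith)]
              linarith
            · by_cases hj2 : xbar i = xbar ib
              · rw [if_neg hj1, if_pos hj2, hj2, abs_of_nonneg (by linarith)]
                linarith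
              · rw [if_neg hj1, if_neg hj2, sub_self, abs_zero]; norm_num
          · -- already an equilibrium
            right
            have heqc := eqconf_repr3 xbar heq (xbar ia) (xbar ib) y α β
              (Or.inr (by rw [abs_of_nonneg (by linarith)]; linarith))
              (Or.inr (by rw [abs_sub_comm, abs_of_nonneg (by linarith)]; linarith))
              (Or.inr (by rw [abs_sub_comm, abs_of_nonneg (by linarith)]; linarith))
              (mkfarg (by linarith) (by linarith))
              (mkfarg hαa (by linarith))
              (mkfarg (by linarith) hβb)
            refine ⟨t, by rw [hrep]; exact heqc, ?_⟩
            intro i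
            rw [hrep, repr3_succ]
            by_cases hj1 : xbar i = xbar ia
            · rw [if_pos hj1, hj1, abs_sub_comm, abs_of_nonneg (by linarith)]
              linarith
            · by_cases hj2 : xbar i = xbar ib
              · rw [if_neg hj1, if_pos hj2, hj2, abs_of_nonneg (by linarith)]
                linarith
              · rw [if_neg hj1, if_neg hj2, sub_self, abs_zero]; norm_num
        · exact Or.inr hset
    have hlim : Tendsto (fun t => (xbar ib - xbar ia) * (M/(M+δ))^t) atTop (nhds 0) := by
      have h1 := tendsto_pow_atTop_nhds_zero_of_lt_one hθ0 hθ1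
      have h2 := h1.const_mul (xbar ib - xbar ia)
      simpa using h2
    obtain ⟨tstar, htstar⟩ := (hlim.eventually_lt_const one_pos).exists
    rcases main tstar with ⟨y, α, β, _, _, _, _, _, hbig, hgap⟩ | ⟨T, hT, hbd⟩
    · linarith
    · exact settle T hT hbd

lemma delta_le {n : ℕ} (w xbar : Fin n → ℝ) (hw : ∀ i, 0 < w i)
    (heq : ∀ i j, xbar i = xbar j ∨ 1 ≤ |xbar i - xbar j|)
    (x0 δ : ℝ) (hδ : 0 < δ) :
    perturbDelta w xbar x0 δ ≤ ∑ i, w i * 2 := by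
  obtain ⟨L, htend, hbd⟩ := partA_bound w xbar hw heq x0 δ hδ
  have hlim : ∀ i, perturbedLimit w xbar x0 δ i = L i := fun i =>
    (htend i).limUnder_eq
  rw [perturbDelta]
  refine Finset.sum_le_sum fun i _ => ?_
  rw [hlim i]
  exact mul_le_mul_of_nonneg_left (hbd i) (hw i).le

lemma delta_ge {n : ℕ} (w xbar : Fin n → ℝ) (hw : ∀ i, 0 < w i)
    (heq : ∀ i j, xbar i = xbar j ∨ 1 ≤ |xbar i - xbar j|)
    (a b : ℝ) (ha : ∃ i, xbar i = a) (hb : ∃ i, xbar i = b) (hab : a < b)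
    (hd1 : 1 ≤ b - a) (hd2 : b - a < 2)
    (hMd : max (clusterWeight w xbar a) (clusterWeight w xbar b) * (b - a)
      ≤ clusterWeight w xbar a + clusterWeight w xbar b)
    (δ : ℝ) (hδ : 0 < δ) :
    min (clusterWeight w xbar a) (clusterWeight w xbar b) ≤
      perturbDelta w xbar ((a+b)/2) δ := by
  obtain ⟨g, hga, hgb, htend⟩ :=
    partB_traj w xbar hw heq a b ha hb hab hd1 hd2 hMd δ hδ
  have hlim : ∀ i, perturbedLimit w xbar ((a+b)/2) δ i =
      (if xbar i = a then g else if xbar i = b then g else xbar i) := fun i =>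
    (htend i).limUnder_eq
  have hWa : 0 < clusterWeight w xbar a := clusterWeight_pos w xbar hw ha
  have hWb : 0 < clusterWeight w xbar b := clusterWeight_pos w xbar hw hb
  have key : ∀ i, w i * |xbar i - perturbedLimit w xbar ((a+b)/2) δ i| =
      (if xbar i = a then w i * (g - a) else 0) +
      (if xbar i = b then w i * (b - g) else 0) := by
    intro i
    rw [hlim i]
    by_cases h1 : xbar i = a
    · have h2 : xbar i ≠ b := by rw [h1]; exact hab.ne
      rw [if_pos h1, if_pos h1, if_neg h2, h1, abs_sub_comm,
        abs_of_nonneg (by linarith), add_zero]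
    · by_cases h2 : xbar i = b
      · rw [if_neg h1, if_pos h2, if_neg h1, if_pos h2, h2,
          abs_of_nonneg (by linarith), zero_add]
      · rw [if_neg h1, if_neg h2, if_neg h1, if_neg h2, sub_self, abs_zero,
          mul_zero, add_zero]
  rw [perturbDelta, Finset.sum_congr rfl (fun i _ => key i), Finset.sum_add_distrib]
  have e1 : ∑ i, (if xbar i = a then w i * (g - a) else 0) =
      clusterWeight w xbar a * (g - a) := by
    rw [← Finset.sum_filter, clusterWeight, ← Finset.sum_mul]
  have e2 : ∑ i, (if xbar i = b then w i * (b - g) else 0) =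
      clusterWeight w xbar b * (b - g) := by
    rw [← Finset.sum_filter, clusterWeight, ← Finset.sum_mul]
  rw [e1, e2]
  have hm1 : min (clusterWeight w xbar a) (clusterWeight w xbar b) ≤
      clusterWeight w xbar a := min_le_left _ _
  have hm2 : min (clusterWeight w xbar a) (clusterWeight w xbar b) ≤
      clusterWeight w xbar b := min_le_right _ _
  nlinarith [mul_le_mul_of_nonneg_right hm1 (by linarith : (0:ℝ) ≤ g - a),
    mul_le_mul_of_nonneg_right hm2 (by linarith : (0:ℝ) ≤ b - g),
    lt_min hWa hWb]

lemma unstable {n : ℕ} (w xbar : Fin n → ℝ) (hw : ∀ i, 0 < w i)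
    (heq : ∀ i j, xbar i = xbar j ∨ 1 ≤ |xbar i - xbar j|)
    (a b : ℝ) (ha : ∃ i, xbar i = a) (hb : ∃ i, xbar i = b) (hab : a < b)
    (hd1 : 1 ≤ b - a) (hd2 : b - a < 2)
    (hMd : max (clusterWeight w xbar a) (clusterWeight w xbar b) * (b - a)
      ≤ clusterWeight w xbar a + clusterWeight w xbar b) :
    ¬ IsStableEquilibrium w xbar := by
  intro hstab
  have hWa : 0 < clusterWeight w xbar a := clusterWeight_pos w xbar hw ha
  have hWb : 0 < clusterWeight w xbar b := clusterWeight_pos w xbar hw hb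
  have hε : 0 < min (clusterWeight w xbar a) (clusterWeight w xbar b) :=
    lt_min hWa hWb
  have hsup : ∀ δ : ℝ, 0 < δ →
      min (clusterWeight w xbar a) (clusterWeight w xbar b) ≤
      ⨆ x0 : ℝ, perturbDelta w xbar x0 δ := by
    intro δ hδ
    have hbdd : BddAbove (Set.range fun x0 => perturbDelta w xbar x0 δ) := by
      refine ⟨∑ i, w i * 2, ?_⟩
      rintro _ ⟨x0, rfl⟩
      exact delta_le w xbar hw heq x0 δ hδ
    exact le_ciSup_of_le hbdd ((a+b)/2)
      (delta_ge w xbar hw heq a b ha hb hab hd1 hd2 hMd δ hδ)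
  have hev1 := hstab.eventually_lt_const hε
  have hev2 : ∀ᶠ δ in nhdsWithin (0:ℝ) (Set.Ioi 0), (0:ℝ) < δ :=
    eventually_mem_nhdsWithin
  obtain ⟨δ, h1, h2⟩ := (hev1.and hev2).exists
  exact absurd (hsup δ h2) (not_le.2 h1)


/-- If an equilibrium of the weighted Krause model is stable with
respect to the addition of a perturbing agent, then every pair of distinct
clusters satisfies the inter-cluster distance condition. -/
theorem krause_stability_necessary {n : ℕ} (w : Fin n → ℝ) (hw : ∀ i, 0 < w i)
    (xbar : Fin n → ℝ)
    (heq : ∀ i j : Fin n, xbar i = xbar j ∨ 1 ≤ |xbar i - xbar j|)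
    (hstab : IsStableEquilibrium w xbar) :
    ∀ a b : ℝ, (∃ i, xbar i = a) → (∃ j, xbar j = b) → a ≠ b →
      (clusterWeight w xbar a = clusterWeight w xbar b ∧ 2 ≤ |a - b|) ∨
      (clusterWeight w xbar a ≠ clusterWeight w xbar b ∧
        1 + min (clusterWeight w xbar a) (clusterWeight w xbar b) /
            max (clusterWeight w xbar a) (clusterWeight w xbar b) < |a - b|) := by
  intro a b ha hb hab
  have hWa : 0 < clusterWeight w xbar a := clusterWeight_pos w xbar hw ha
  have hWb : 0 < clusterWeight w xbar b := clusterWeight_pos w xbar hw hb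
  have hmax : 0 < max (clusterWeight w xbar a) (clusterWeight w xbar b) :=
    lt_of_lt_of_le hWa (le_max_left _ _)
  have hD1 : 1 ≤ |a - b| := by
    obtain ⟨ia, hia⟩ := ha
    obtain ⟨ib, hib⟩ := hb
    rcases heq ia ib with h | h
    · exact absurd (by rw [← hia, ← hib, h]) hab
    · rwa [hia, hib] at h
  rcases le_or_gt 2 |a - b| with h2 | h2
  · by_cases hW : clusterWeight w xbar a = clusterWeight w xbar b
    · exact Or.inl ⟨hW, h2⟩
    · right
      refine ⟨hW, ?_⟩
      have hlt1 : min (clusterWeight w xbar a) (clusterWeight w xbar b) /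
          max (clusterWeight w xbar a) (clusterWeight w xbar b) < 1 :=
        (div_lt_one hmax).2 (min_lt_max.2 hW)
      linarith
  · by_cases hcond : max (clusterWeight w xbar a) (clusterWeight w xbar b) * |a - b| ≤
        clusterWeight w xbar a + clusterWeight w xbar b
    · exfalso
      rcases lt_or_gt_of_ne hab with hlt | hlt
      · have habs : |a - b| = b - a := by
          rw [abs_sub_comm]; exact abs_of_nonneg (by linarith)
        rw [habs] at hD1 h2 hcond
        exact unstable w xbar hw heq a b ha hb hlt hD1 h2 hcond hstab
      · have habs : |a - b| = a - b := abs_of_nonneg (by linarith)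
        rw [habs] at hD1 h2 hcond
        refine unstable w xbar hw heq b a hb ha hlt hD1 h2 ?_ hstab
        rw [max_comm, add_comm]
        exact hcond
    · right
      push_neg at hcond
      have hW : clusterWeight w xbar a ≠ clusterWeight w xbar b := by
        intro h
        rw [h, max_self] at hcond
        nlinarith
      refine ⟨hW, ?_⟩
      have hsum : min (clusterWeight w xbar a) (clusterWeight w xbar b) +
          max (clusterWeight w xbar a) (clusterWeight w xbar b) =
          clusterWeight w xbar a + clusterWeight w xbar b := min_add_max _ _
      rw [show (1:ℝ) + min (clusterWeight w xbar a) (clusterWeight w xbar b) /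
            max (clusterWeight w xbar a) (clusterWeight w xbar b) =
          (max (clusterWeight w xbar a) (clusterWeight w xbar b) +
            min (clusterWeight w xbar a) (clusterWeight w xbar b)) /
            max (clusterWeight w xbar a) (clusterWeight w xbar b) from by
        field_simp]
      refine (div_lt_iff₀ hmax).2 ?_
      rw [mul_comm]
      linarith
end

section
/- Let L > 0 and let (x_t) be a trajectory of the continuous-agent Krause model with x₀ ∈ X_L. Writing Δx_t = x_{t+1} − x_t, the series Σ_{t=0}^∞ ∫₀¹∫₀¹ χ_{x_t}(α,β) (Δx_t(α) + Δx_t(β))² dα dβ is finite. -/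
open MeasureTheory

/-- Indicator of the connectivity: `χ_x(α,β) = 1` iff `|x α - x β| < 1`. -/
noncomputable def chiFn (x : ℝ → ℝ) (α β : ℝ) : ℝ :=
  if |x α - x β| < 1 then 1 else 0

/-- `(x_t)` is a trajectory of the continuous-agent Krause model in `X_L`:
each `x_t` is measurable, maps `[0,1]` into `[0,L]`, and the update rule holds
on `[0,1]` (with the convention that the opinion stays unchanged when the
neighborhood has measure zero). -/
def IsKrauseTraj (L : ℝ) (x : ℕ → ℝ → ℝ) : Prop :=
  (∀ t, Measurable (x t)) ∧
  (∀ t, ∀ α ∈ Set.Icc (0 : ℝ) 1, x t α ∈ Set.Icc (0 : ℝ) L) ∧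
  (∀ t, ∀ α ∈ Set.Icc (0 : ℝ) 1,
    x (t + 1) α =
      if volume {β ∈ Set.Icc (0 : ℝ) 1 | |x t α - x t β| < 1} = 0 then x t α
      else (∫ β in {β ∈ Set.Icc (0 : ℝ) 1 | |x t α - x t β| < 1}, x t β) /
        (volume {β ∈ Set.Icc (0 : ℝ) 1 | |x t α - x t β| < 1}).toReal)

namespace KrauseAux

lemma isFiniteI : IsFiniteMeasure (volume.restrict (Set.Icc (0:ℝ) 1)) := by
  constructor
  rw [Measure.restrict_apply_univ, Real.volume_Icc]
  exact ENNReal.ofReal_lt_top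

lemma integrable_bdd {f : ℝ → ℝ} (hf : Measurable f) {C : ℝ}
    (h : ∀ a ∈ Set.Icc (0:ℝ) 1, |f a| ≤ C) :
    Integrable f (volume.restrict (Set.Icc (0:ℝ) 1)) := by
  haveI := isFiniteI
  refine Integrable.mono' (integrable_const C) hf.aestronglyMeasurable ?_
  refine (ae_restrict_iff' measurableSet_Icc).mpr (Filter.Eventually.of_forall ?_)
  simpa [Real.norm_eq_abs] using h

lemma integrable_bdd2 {f : ℝ × ℝ → ℝ} (hf : Measurable f) {C : ℝ}
    (h : ∀ p : ℝ × ℝ, p.1 ∈ Set.Icc (0:ℝ) 1 → p.2 ∈ Set.Icc (0:ℝ) 1 → |f p| ≤ C) :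
    Integrable f ((volume.restrict (Set.Icc (0:ℝ) 1)).prod
      (volume.restrict (Set.Icc (0:ℝ) 1))) := by
  haveI := isFiniteI
  refine Integrable.mono' (integrable_const C) hf.aestronglyMeasurable ?_
  rw [Measure.prod_restrict]
  refine (ae_restrict_iff' (measurableSet_Icc.prod measurableSet_Icc)).mpr
    (Filter.Eventually.of_forall ?_)
  rintro ⟨a, b⟩ ⟨ha, hb⟩
  simpa [Real.norm_eq_abs] using h ⟨a, b⟩ ha hb

lemma measurable_chi {u : ℝ → ℝ} (hu : Measurable u) :
    Measurable (fun p : ℝ × ℝ => chiFn u p.1 p.2) := by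
  unfold chiFn
  exact Measurable.ite
    (measurableSet_lt (((hu.comp measurable_fst).sub (hu.comp measurable_snd)).abs)
      measurable_const) measurable_const measurable_const

lemma measurable_chi_right {u : ℝ → ℝ} (hu : Measurable u) (α : ℝ) :
    Measurable (fun β => chiFn u α β) := by
  unfold chiFn
  exact Measurable.ite
    (measurableSet_lt ((measurable_const.sub hu).abs) measurable_const)
    measurable_const measurable_const

lemma chi_nonneg (u : ℝ → ℝ) (α β : ℝ) : 0 ≤ chiFn u α β := by
  unfold chiFn; split <;> norm_num

lemma chi_le_one (u : ℝ → ℝ) (α β : ℝ) : chiFn u α β ≤ 1 := by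
  unfold chiFn; split <;> norm_num

lemma abs_chi_le_one (u : ℝ → ℝ) (α β : ℝ) : |chiFn u α β| ≤ 1 := by
  rw [abs_of_nonneg (chi_nonneg u α β)]; exact chi_le_one u α β

section Key

variable {L : ℝ} {u v : ℝ → ℝ}

/-- the neighborhood set -/
def N (u : ℝ → ℝ) (α : ℝ) : Set ℝ := {β ∈ Set.Icc (0 : ℝ) 1 | |u α - u β| < 1}

lemma N_eq (α : ℝ) : N u α = Set.Icc (0:ℝ) 1 ∩ {β | |u α - u β| < 1} := rfl

lemma chi_eq_indicator (α β : ℝ) :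
    chiFn u α β = Set.indicator {β | |u α - u β| < 1} (fun _ => (1:ℝ)) β := by
  simp only [chiFn, Set.indicator_apply, Set.mem_setOf_eq]

lemma chi_mul_eq_indicator (α β : ℝ) :
    chiFn u α β * u β = Set.indicator {β | |u α - u β| < 1} u β := by
  simp only [chiFn, Set.indicator_apply, Set.mem_setOf_eq]
  split <;> simp

lemma measurable_nbhd (hu : Measurable u) (α : ℝ) :
    MeasurableSet {β : ℝ | |u α - u β| < 1} :=
  measurableSet_lt ((measurable_const.sub hu).abs) measurable_const

/-- K2 -/
lemma integral_chi (hu : Measurable u) (α : ℝ) :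
    ∫ β in Set.Icc (0:ℝ) 1, chiFn u α β = (volume (N u α)).toReal := by
  simp only [chi_eq_indicator (u := u) α]
  rw [setIntegral_indicator (measurable_nbhd hu α), setIntegral_const, ← N_eq]
  simp
  rfl

/-- K1 -/
lemma integral_chi_mul (hu : Measurable u)
    (hrule : ∀ α ∈ Set.Icc (0:ℝ) 1, v α =
      if volume {β ∈ Set.Icc (0 : ℝ) 1 | |u α - u β| < 1} = 0 then u α
      else (∫ β in {β ∈ Set.Icc (0 : ℝ) 1 | |u α - u β| < 1}, u β) /
        (volume {β ∈ Set.Icc (0 : ℝ) 1 | |u α - u β| < 1}).toReal)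
    {α : ℝ} (hα : α ∈ Set.Icc (0:ℝ) 1) :
    ∫ β in Set.Icc (0:ℝ) 1, chiFn u α β * u β = v α * (volume (N u α)).toReal := by
  have hset : ∫ β in Set.Icc (0:ℝ) 1, chiFn u α β * u β = ∫ β in N u α, u β := by
    simp only [chi_mul_eq_indicator (u := u) α]
    rw [setIntegral_indicator (measurable_nbhd hu α), ← N_eq]
  rw [hset]
  have hr : v α = if volume (N u α) = 0 then u α
      else (∫ β in N u α, u β) / (volume (N u α)).toReal := hrule α hα
  by_cases h0 : volume (N u α) = 0
  · have hz : volume.restrict (N u α) = 0 := Measure.restrict_eq_zero.mpr h0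
    rw [hz]
    simp [h0]
  · have hne : volume (N u α) ≠ ⊤ := by
      refine (lt_of_le_of_lt (measure_mono ?_) (?_ : volume (Set.Icc (0:ℝ) 1) < ⊤)).ne
      · exact fun β hβ => hβ.1
      · rw [Real.volume_Icc]; exact ENNReal.ofReal_lt_top
    have htR : (volume (N u α)).toReal ≠ 0 := ENNReal.toReal_ne_zero.mpr ⟨h0, hne⟩
    rw [if_neg h0] at hr
    rw [hr, div_mul_cancel₀ _ htR]

/-- K4 : the inner integral of `H(α, ·)` vanishes. -/
lemma inner_H_zero (hL : 0 < L) (hu : Measurable u)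
    (hub : ∀ α ∈ Set.Icc (0:ℝ) 1, u α ∈ Set.Icc (0:ℝ) L)
    (hrule : ∀ α ∈ Set.Icc (0:ℝ) 1, v α =
      if volume {β ∈ Set.Icc (0 : ℝ) 1 | |u α - u β| < 1} = 0 then u α
      else (∫ β in {β ∈ Set.Icc (0 : ℝ) 1 | |u α - u β| < 1}, u β) /
        (volume {β ∈ Set.Icc (0 : ℝ) 1 | |u α - u β| < 1}).toReal)
    {α : ℝ} (hα : α ∈ Set.Icc (0:ℝ) 1) :
    ∫ β in Set.Icc (0:ℝ) 1,
      chiFn u α β * (-2*(u α - u β)*(v α - u α) - 2*(v α - u α)^2) = 0 := by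
  have hint1 : Integrable (fun β => chiFn u α β * u β)
      (volume.restrict (Set.Icc (0:ℝ) 1)) := by
    refine integrable_bdd ((measurable_chi_right hu α).mul hu) (C := L) ?_
    intro β hβ
    have hb := hub β hβ
    rw [Set.mem_Icc] at hb
    rw [abs_mul]
    calc |chiFn u α β| * |u β| ≤ 1 * |u β| :=
          mul_le_mul_of_nonneg_right (abs_chi_le_one u α β) (abs_nonneg _)
      _ = |u β| := one_mul _
      _ ≤ L := by rw [abs_of_nonneg hb.1]; exact hb.2
  have hint2 : Integrable (fun β => chiFn u α β)
      (volume.restrict (Set.Icc (0:ℝ) 1)) := by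
    refine integrable_bdd (measurable_chi_right hu α) (C := 1) ?_
    intro β _; exact abs_chi_le_one u α β
  have hfun : (fun β => chiFn u α β * (-2*(u α - u β)*(v α - u α) - 2*(v α - u α)^2))
      = fun β => (2*(v α - u α)) * (chiFn u α β * u β) +
          (-2*(u α)*(v α - u α) - 2*(v α - u α)^2) * chiFn u α β := by
    funext β; ring
  rw [hfun, integral_add (hint1.const_mul _) (hint2.const_mul _),
    integral_const_mul, integral_const_mul, integral_chi hu α,
    integral_chi_mul hu hrule hα]
  ring

/-- Pointwise inequality. -/
lemma ptwise (u v : ℝ → ℝ) (α β : ℝ) :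
    0 ≤ min ((u α - u β)^2) 1 - min ((v α - v β)^2) 1
      - chiFn u α β * ((v α - u α) + (v β - u β))^2
      - chiFn u α β * (-2*(u α - u β)*(v α - u α) - 2*(v α - u α)^2)
      - chiFn u β α * (-2*(u β - u α)*(v β - u β) - 2*(v β - u β)^2) := by
  unfold chiFn
  rcases lt_or_ge |u α - u β| 1 with h | h
  · rw [if_pos h, if_pos (by rwa [abs_sub_comm])]
    have h1 : min ((u α - u β)^2) 1 = (u α - u β)^2 := by
      refine min_eq_left ?_
      have := sq_abs (u α - u β)
      nlinarith [abs_nonneg (u α - u β)]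
    have h2 : min ((v α - v β)^2) 1 ≤ (v α - v β)^2 := min_le_left _ _
    rw [h1]
    nlinarith [h2]
  · rw [if_neg (not_lt.mpr h), if_neg (by rw [abs_sub_comm]; exact not_lt.mpr h)]
    have h1 : min ((u α - u β)^2) 1 = 1 := by
      refine min_eq_right ?_
      have := sq_abs (u α - u β)
      nlinarith [abs_nonneg (u α - u β)]
    have h2 : min ((v α - v β)^2) 1 ≤ 1 := min_le_right _ _
    rw [h1]
    linarith

/-- The main dissipation step. -/
lemma step (hL : 0 < L) (hu : Measurable u) (hv : Measurable v)
    (hub : ∀ α ∈ Set.Icc (0:ℝ) 1, u α ∈ Set.Icc (0:ℝ) L)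
    (hvb : ∀ α ∈ Set.Icc (0:ℝ) 1, v α ∈ Set.Icc (0:ℝ) L)
    (hrule : ∀ α ∈ Set.Icc (0:ℝ) 1, v α =
      if volume {β ∈ Set.Icc (0 : ℝ) 1 | |u α - u β| < 1} = 0 then u α
      else (∫ β in {β ∈ Set.Icc (0 : ℝ) 1 | |u α - u β| < 1}, u β) /
        (volume {β ∈ Set.Icc (0 : ℝ) 1 | |u α - u β| < 1}).toReal) :
    (∫ α in Set.Icc (0:ℝ) 1, ∫ β in Set.Icc (0:ℝ) 1,
        chiFn u α β * ((v α - u α) + (v β - u β))^2)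
      ≤ (∫ α in Set.Icc (0:ℝ) 1, ∫ β in Set.Icc (0:ℝ) 1, min ((u α - u β)^2) 1)
        - ∫ α in Set.Icc (0:ℝ) 1, ∫ β in Set.Icc (0:ℝ) 1, min ((v α - v β)^2) 1 := by
  classical
  set μ : Measure ℝ := volume.restrict (Set.Icc (0:ℝ) 1) with hμ
  haveI := isFiniteI
  set Q1 : ℝ × ℝ → ℝ := fun p => min ((u p.1 - u p.2)^2) 1 with hQ1
  set Q2 : ℝ × ℝ → ℝ := fun p => min ((v p.1 - v p.2)^2) 1 with hQ2
  set Q3 : ℝ × ℝ → ℝ := fun p =>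
    chiFn u p.1 p.2 * ((v p.1 - u p.1) + (v p.2 - u p.2))^2 with hQ3
  set Hf : ℝ × ℝ → ℝ := fun p =>
    chiFn u p.1 p.2 * (-2*(u p.1 - u p.2)*(v p.1 - u p.1) - 2*(v p.1 - u p.1)^2) with hHf
  set Hs : ℝ × ℝ → ℝ := fun p => Hf p.swap with hHs
  have habs : ∀ w : ℝ → ℝ, (∀ α ∈ Set.Icc (0:ℝ) 1, w α ∈ Set.Icc (0:ℝ) L) →
      ∀ a ∈ Set.Icc (0:ℝ) 1, ∀ b ∈ Set.Icc (0:ℝ) 1, |w a - w b| ≤ L := by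
    intro w hw a ha b hb
    have h1 := hw a ha; have h2 := hw b hb
    rw [Set.mem_Icc] at h1 h2
    rw [abs_le]; constructor <;> linarith
  have habsd : ∀ a ∈ Set.Icc (0:ℝ) 1, |v a - u a| ≤ L := by
    intro a ha
    have h1 := hub a ha; have h2 := hvb a ha
    rw [Set.mem_Icc] at h1 h2
    rw [abs_le]; constructor <;> linarith
  -- integrabilities
  have hm_u2 : Measurable (fun p : ℝ × ℝ => u p.1 - u p.2) :=
    (hu.comp measurable_fst).sub (hu.comp measurable_snd)
  have hm_v2 : Measurable (fun p : ℝ × ℝ => v p.1 - v p.2) :=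
    (hv.comp measurable_fst).sub (hv.comp measurable_snd)
  have hm_d1 : Measurable (fun p : ℝ × ℝ => v p.1 - u p.1) :=
    (hv.comp measurable_fst).sub (hu.comp measurable_fst)
  have hm_d2 : Measurable (fun p : ℝ × ℝ => v p.2 - u p.2) :=
    (hv.comp measurable_snd).sub (hu.comp measurable_snd)
  have hminbd : ∀ s : ℝ, |min (s^2) 1| ≤ 1 := by
    intro s
    rw [abs_of_nonneg (le_min (sq_nonneg s) zero_le_one)]
    exact min_le_right _ _
  have iQ1 : Integrable Q1 (μ.prod μ) := by
    refine integrable_bdd2 ((hm_u2.pow_const 2).min measurable_const) (C := 1) ?_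
    intro p _ _; exact hminbd _
  have iQ2 : Integrable Q2 (μ.prod μ) := by
    refine integrable_bdd2 ((hm_v2.pow_const 2).min measurable_const) (C := 1) ?_
    intro p _ _; exact hminbd _
  have iQ3 : Integrable Q3 (μ.prod μ) := by
    refine integrable_bdd2 ((measurable_chi hu).mul ((hm_d1.add hm_d2).pow_const 2))
      (C := 4 * L^2) ?_
    rintro ⟨a, b⟩ ha hb
    have h1 := habsd a ha; have h2 := habsd b hb
    rw [abs_mul]
    calc |chiFn u a b| * |((v a - u a) + (v b - u b))^2|
        ≤ 1 * |((v a - u a) + (v b - u b))^2| :=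
          mul_le_mul_of_nonneg_right (abs_chi_le_one u a b) (abs_nonneg _)
      _ = ((v a - u a) + (v b - u b))^2 := by rw [one_mul, abs_of_nonneg (sq_nonneg _)]
      _ ≤ 4 * L^2 := by
          nlinarith [abs_nonneg (v a - u a), abs_nonneg (v b - u b),
            sq_abs (v a - u a), sq_abs (v b - u b), abs_le.mp h1, abs_le.mp h2]
  have hHfm : Measurable Hf := by
    refine (measurable_chi hu).mul ?_
    exact (((measurable_const.mul hm_u2).mul hm_d1).sub
      (measurable_const.mul (hm_d1.pow_const 2)))
  have hHfbd : ∀ p : ℝ × ℝ, p.1 ∈ Set.Icc (0:ℝ) 1 → p.2 ∈ Set.Icc (0:ℝ) 1 →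
      |Hf p| ≤ 4 * L^2 := by
    rintro ⟨a, b⟩ ha hb
    have h1 := habs u hub a ha b hb
    have h2 := habsd a ha
    simp only [hHf]
    rw [abs_mul]
    calc |chiFn u a b| * |(-2*(u a - u b)*(v a - u a) - 2*(v a - u a)^2)|
        ≤ 1 * |(-2*(u a - u b)*(v a - u a) - 2*(v a - u a)^2)| :=
          mul_le_mul_of_nonneg_right (abs_chi_le_one u a b) (abs_nonneg _)
      _ = |(-2*(u a - u b)*(v a - u a) - 2*(v a - u a)^2)| := one_mul _
      _ ≤ 4 * L^2 := by
          rw [abs_le]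
          constructor <;>
            nlinarith [abs_le.mp h1, abs_le.mp h2, sq_abs (u a - u b), sq_abs (v a - u a),
              abs_nonneg (u a - u b), abs_nonneg (v a - u a)]
  have iHf : Integrable Hf (μ.prod μ) := integrable_bdd2 hHfm hHfbd
  have iHs : Integrable Hs (μ.prod μ) := by
    refine integrable_bdd2 (hHfm.comp measurable_swap) (C := 4 * L^2) ?_
    rintro ⟨a, b⟩ ha hb
    exact hHfbd ⟨b, a⟩ hb ha
  -- convert iterated integrals to product integrals
  have e1 : (∫ α in Set.Icc (0:ℝ) 1, ∫ β in Set.Icc (0:ℝ) 1, min ((u α - u β)^2) 1)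
      = ∫ p, Q1 p ∂(μ.prod μ) := (integral_prod Q1 iQ1).symm
  have e2 : (∫ α in Set.Icc (0:ℝ) 1, ∫ β in Set.Icc (0:ℝ) 1, min ((v α - v β)^2) 1)
      = ∫ p, Q2 p ∂(μ.prod μ) := (integral_prod Q2 iQ2).symm
  have e3 : (∫ α in Set.Icc (0:ℝ) 1, ∫ β in Set.Icc (0:ℝ) 1,
      chiFn u α β * ((v α - u α) + (v β - u β))^2)
      = ∫ p, Q3 p ∂(μ.prod μ) := (integral_prod Q3 iQ3).symm
  rw [e1, e2, e3]
  -- ∫ Hf = 0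
  have hHf0 : ∫ p, Hf p ∂(μ.prod μ) = 0 := by
    rw [integral_prod Hf iHf]
    have : ∀ α ∈ Set.Icc (0:ℝ) 1, (∫ β, Hf (α, β) ∂μ) = 0 := by
      intro α hα
      exact inner_H_zero hL hu hub hrule hα
    rw [setIntegral_congr_fun measurableSet_Icc this]
    simp
  have hHs0 : ∫ p, Hs p ∂(μ.prod μ) = 0 := by
    have : ∫ p, Hs p ∂(μ.prod μ) = ∫ p, Hf p ∂(μ.prod μ) := integral_prod_swap Hf
    rw [this, hHf0]
  -- nonnegativity of the remainder
  have hnn : 0 ≤ ∫ p, (Q1 p - Q2 p - Q3 p - Hf p - Hs p) ∂(μ.prod μ) := by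
    refine integral_nonneg ?_
    rintro ⟨a, b⟩
    simpa [hQ1, hQ2, hQ3, hHf, hHs] using ptwise u v a b
  have i12 : Integrable (fun p => Q1 p - Q2 p) (μ.prod μ) := iQ1.sub iQ2
  have i123 : Integrable (fun p => Q1 p - Q2 p - Q3 p) (μ.prod μ) := i12.sub iQ3
  have i1234 : Integrable (fun p => Q1 p - Q2 p - Q3 p - Hf p) (μ.prod μ) := i123.sub iHf
  have hsplit : ∫ p, (Q1 p - Q2 p - Q3 p - Hf p - Hs p) ∂(μ.prod μ)
      = (∫ p, Q1 p ∂(μ.prod μ)) - (∫ p, Q2 p ∂(μ.prod μ)) - (∫ p, Q3 p ∂(μ.prod μ))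
        - (∫ p, Hf p ∂(μ.prod μ)) - (∫ p, Hs p ∂(μ.prod μ)) := by
    calc ∫ p, (Q1 p - Q2 p - Q3 p - Hf p - Hs p) ∂(μ.prod μ)
        = (∫ p, (Q1 p - Q2 p - Q3 p - Hf p) ∂(μ.prod μ)) - ∫ p, Hs p ∂(μ.prod μ) :=
          integral_sub i1234 iHs
      _ = (∫ p, (Q1 p - Q2 p - Q3 p) ∂(μ.prod μ)) - (∫ p, Hf p ∂(μ.prod μ))
            - ∫ p, Hs p ∂(μ.prod μ) := by rw [integral_sub i123 iHf]
      _ = (∫ p, (Q1 p - Q2 p) ∂(μ.prod μ)) - (∫ p, Q3 p ∂(μ.prod μ))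
            - (∫ p, Hf p ∂(μ.prod μ)) - ∫ p, Hs p ∂(μ.prod μ) := by
          rw [integral_sub i12 iQ3]
      _ = (∫ p, Q1 p ∂(μ.prod μ)) - (∫ p, Q2 p ∂(μ.prod μ)) - (∫ p, Q3 p ∂(μ.prod μ))
            - (∫ p, Hf p ∂(μ.prod μ)) - ∫ p, Hs p ∂(μ.prod μ) := by
          rw [integral_sub iQ1 iQ2]
  rw [hsplit, hHf0, hHs0] at hnn
  linarith

end Key

end KrauseAux

/-- Along any trajectory of the continuous-agent Krause model,
the series `Σ_t ∬ χ_{x_t}(α,β) (Δx_t(α) + Δx_t(β))² dα dβ` is finite. -/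
theorem krause_continuum_summable (L : ℝ) (hL : 0 < L) (x : ℕ → ℝ → ℝ)
    (htraj : IsKrauseTraj L x) :
    Summable (fun t : ℕ =>
      ∫ α in Set.Icc (0 : ℝ) 1, ∫ β in Set.Icc (0 : ℝ) 1,
        chiFn (x t) α β *
          ((x (t + 1) α - x t α) + (x (t + 1) β - x t β)) ^ 2) := by
  obtain ⟨hmeas, hmem, hrule⟩ := htraj
  set S : ℕ → ℝ := fun t =>
    ∫ α in Set.Icc (0 : ℝ) 1, ∫ β in Set.Icc (0 : ℝ) 1,
      chiFn (x t) α β *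
        ((x (t + 1) α - x t α) + (x (t + 1) β - x t β)) ^ 2 with hS
  set e : ℕ → ℝ := fun t =>
    ∫ α in Set.Icc (0 : ℝ) 1, ∫ β in Set.Icc (0 : ℝ) 1,
      min ((x t α - x t β)^2) 1 with he
  have hstep : ∀ t, S t ≤ e t - e (t + 1) := by
    intro t
    have := KrauseAux.step (u := x t) (v := x (t + 1)) hL (hmeas t) (hmeas (t + 1))
      (hmem t) (hmem (t + 1)) (hrule t)
    simpa [hS, he] using this
  have hSnn : ∀ t, 0 ≤ S t := by
    intro t
    refine integral_nonneg fun α => integral_nonneg fun β => ?_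
    exact mul_nonneg (KrauseAux.chi_nonneg _ _ _) (sq_nonneg _)
  have henn : ∀ t, 0 ≤ e t := by
    intro t
    refine integral_nonneg fun α => integral_nonneg fun β => ?_
    exact le_min (sq_nonneg _) zero_le_one
  refine summable_of_sum_range_le hSnn (c := e 0) fun n => ?_
  calc ∑ i ∈ Finset.range n, S i
      ≤ ∑ i ∈ Finset.range n, (e i - e (i + 1)) :=
        Finset.sum_le_sum fun i _ => hstep i
    _ = e 0 - e n := Finset.sum_range_sub' e n
    _ ≤ e 0 := by linarith [henn n]
end

section
/- Fix L > 0. For every ε > 0 there exists δ > 0 such that for every measurable x : [0,1] → [0,L]: if λ({α ∈ [0,1] : |(L_x x)(α)| ≥ δ}) < δ, then there exists s ∈ F with λ({α ∈ [0,1] : |x(α) − s(α)| ≥ ε}) < ε. In particular, if (L_x x)(α) = 0 for almost every α, then x agrees almost everywhere with some element of F. -/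
open MeasureTheory

/-- The Laplacian applied to the opinion function itself:
`(L_x x)(α) = (∫ χ_x(α,β) dβ)·x(α) − ∫ χ_x(α,β) x(β) dβ`. -/
noncomputable def lapFn (x : ℝ → ℝ) (α : ℝ) : ℝ :=
  (∫ β in Set.Icc (0 : ℝ) 1, chiFn x α β) * x α -
    ∫ β in Set.Icc (0 : ℝ) 1, chiFn x α β * x β

/-- `F`: measurable functions `[0,1] → [0,L]` whose values on `[0,1]` are
pairwise either equal or at distance at least 1. -/
def Fset (L : ℝ) : Set (ℝ → ℝ) :=
  {s | Measurable s ∧ (∀ α ∈ Set.Icc (0 : ℝ) 1, s α ∈ Set.Icc (0 : ℝ) L) ∧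
    ∀ α ∈ Set.Icc (0 : ℝ) 1, ∀ β ∈ Set.Icc (0 : ℝ) 1,
      s α = s β ∨ 1 ≤ |s α - s β|}

namespace HK

open ENNReal

lemma int_bdd {X : Type*} [MeasurableSpace X] (ρ : Measure X) [IsFiniteMeasure ρ]
    {f : X → ℝ} (hf : Measurable f) {C : ℝ} (h : ∀ p, |f p| ≤ C) : Integrable f ρ :=
  ⟨hf.aestronglyMeasurable,
    HasFiniteIntegral.of_bounded (C := C)
      (Filter.Eventually.of_forall (by simpa [Real.norm_eq_abs] using h))⟩

/-- the pairing integrand -/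
noncomputable def pf (x : ℝ → ℝ) (α β : ℝ) : ℝ :=
  if |x α - x β| < 1 then x α - x β else 0

lemma pf_meas {x : ℝ → ℝ} (hx : Measurable x) :
    Measurable (Function.uncurry (pf x)) := by
  unfold pf Function.uncurry
  exact Measurable.ite
    (measurableSet_lt ((hx.comp measurable_fst).sub (hx.comp measurable_snd)).abs
      measurable_const)
    ((hx.comp measurable_fst).sub (hx.comp measurable_snd)) measurable_const

lemma pf_meas1 {x : ℝ → ℝ} (hx : Measurable x) (α : ℝ) :
    Measurable (fun β => pf x α β) := by
  have := (pf_meas hx).comp (measurable_prodMk_left (x := α))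
  exact this

lemma pf_abs_le (x : ℝ → ℝ) (α β : ℝ) : |pf x α β| ≤ 1 := by
  unfold pf
  split
  · rename_i h; exact le_of_lt (by simpa using h)
  · simp

lemma pf_antisymm (x : ℝ → ℝ) (α β : ℝ) : pf x β α = - pf x α β := by
  unfold pf
  rw [abs_sub_comm (x β) (x α)]
  split <;> ring

lemma chi_meas1 {x : ℝ → ℝ} (hx : Measurable x) (α : ℝ) :
    Measurable (fun β => chiFn x α β) := by
  unfold chiFn
  exact Measurable.ite
    (measurableSet_lt ((measurable_const.sub hx).abs) measurable_const)
    measurable_const measurable_const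

lemma chi_abs_le (x : ℝ → ℝ) (α β : ℝ) : |chiFn x α β| ≤ 1 := by
  unfold chiFn; split <;> simp

lemma lap_eq {x : ℝ → ℝ} (hx : Measurable x) {L : ℝ} (hr : ∀ v, x v ∈ Set.Icc 0 L)
    (α : ℝ) :
    lapFn x α = ∫ β in Set.Icc (0:ℝ) 1, pf x α β := by
  have hxb : ∀ v, |x v| ≤ L := fun v => abs_le.mpr ⟨by linarith [(hr v).1, (hr v).2], (hr v).2⟩
  unfold lapFn
  rw [← integral_mul_const]
  rw [← integral_sub]
  · congr 1; funext β
    unfold chiFn pf; split <;> ring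
  · apply int_bdd _ ((chi_meas1 hx α).mul measurable_const) (C := |x α|)
    intro β
    rw [Pi.mul_apply, abs_mul]
    calc |chiFn x α β| * |x α| ≤ 1 * |x α| :=
          mul_le_mul_of_nonneg_right (chi_abs_le x α β) (abs_nonneg _)
      _ = |x α| := one_mul _
  · apply int_bdd _ ((chi_meas1 hx α).mul hx) (C := L)
    intro β
    rw [Pi.mul_apply, abs_mul]
    calc |chiFn x α β| * |x β| ≤ 1 * L :=
          mul_le_mul (chi_abs_le x α β) (hxb β) (abs_nonneg _) one_pos.le
      _ = L := one_mul _

lemma lap_abs_le {x : ℝ → ℝ} (hx : Measurable x) {L : ℝ} (hr : ∀ v, x v ∈ Set.Icc 0 L)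
    (α : ℝ) : |lapFn x α| ≤ 1 := by
  rw [lap_eq hx hr]
  have h1 : |∫ β in Set.Icc (0:ℝ) 1, pf x α β| ≤ ∫ β in Set.Icc (0:ℝ) 1, |pf x α β| :=
    (by simpa [Real.norm_eq_abs] using norm_integral_le_integral_norm (μ := volume.restrict (Set.Icc (0:ℝ) 1)) (fun β => pf x α β))
  refine h1.trans ?_
  have h2 : ∫ β in Set.Icc (0:ℝ) 1, |pf x α β| ≤ ∫ β in Set.Icc (0:ℝ) 1, (1:ℝ) := by
    apply integral_mono
    · exact (int_bdd _ (pf_meas1 hx α) (C := 1) (pf_abs_le x α)).abs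
    · exact int_bdd _ measurable_const (C := 1) (by intro p; simp)
    · intro β; exact pf_abs_le x α β
  refine h2.trans ?_
  simp [Real.volume_Icc]

lemma lap_meas {x : ℝ → ℝ} (hx : Measurable x) {L : ℝ} (hr : ∀ v, x v ∈ Set.Icc 0 L) :
    Measurable (lapFn x) := by
  have : Measurable (fun α => ∫ β in Set.Icc (0:ℝ) 1, pf x α β) := by
    exact (StronglyMeasurable.integral_prod_right (pf_meas hx).stronglyMeasurable).measurable
  have he : (lapFn x) = fun α => ∫ β in Set.Icc (0:ℝ) 1, pf x α β := by
    funext α; exact lap_eq hx hr α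
  rw [he]; exact this


noncomputable def nu : Measure ℝ := volume.restrict (Set.Icc (0:ℝ) 1)

instance : IsProbabilityMeasure nu := by
  constructor; unfold nu
  rw [Measure.restrict_apply_univ]
  simp [Real.volume_Icc]

noncomputable def pf2 (x : ℝ → ℝ) (α β : ℝ) : ℝ :=
  if |x α - x β| < 1 then (x α - x β)^2 else 0

noncomputable def Gfn : ℝ × ℝ → ℝ := fun p => if |p.1 - p.2| < 1 then (p.1 - p.2)^2 else 0

 -- from file a















lemma int_abs_le {X : Type*} [MeasurableSpace X] {ρ : Measure X} [IsProbabilityMeasure ρ]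
    {f : X → ℝ} {C : ℝ} (h : ∀ p, |f p| ≤ C) : |∫ p, f p ∂ρ| ≤ C := by
  have h' : ∀ p, ‖f p‖ ≤ C := fun p => by simpa [Real.norm_eq_abs] using h p
  have := norm_integral_le_of_norm_le_const (μ := ρ) (C := C)
    (Filter.Eventually.of_forall h')
  simpa [Real.norm_eq_abs, measure_univ] using this

lemma Gfn_meas : Measurable Gfn := by
  unfold Gfn
  exact Measurable.ite
    (measurableSet_lt (measurable_fst.sub measurable_snd).abs measurable_const)
    ((measurable_fst.sub measurable_snd).pow_const 2) measurable_const

lemma pf2_meas {x : ℝ → ℝ} (hx : Measurable x) :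
    Measurable (Function.uncurry (pf2 x)) := by
  unfold pf2 Function.uncurry
  exact Measurable.ite
    (measurableSet_lt ((hx.comp measurable_fst).sub (hx.comp measurable_snd)).abs
      measurable_const)
    (((hx.comp measurable_fst).sub (hx.comp measurable_snd)).pow_const 2) measurable_const

lemma sq_le_one_of_abs_lt_one {d : ℝ} (h : |d| < 1) : d^2 ≤ 1 := by
  nlinarith [sq_abs d, abs_nonneg d]

lemma medium_bound {x : ℝ → ℝ} (hx : Measurable x) {L : ℝ} (hL : 0 < L)
    (hr : ∀ v, x v ∈ Set.Icc 0 L) {a δ : ℝ} (ha : 0 < a) (hδ : 0 < δ)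
    (hIlap : ∫ α, |lapFn x α| ∂nu ≤ 2*δ) :
    ((nu.map x).prod (nu.map x)) {p : ℝ×ℝ | a ≤ |p.1 - p.2| ∧ |p.1 - p.2| < 1}
      ≤ ENNReal.ofReal (4*L*δ/a^2) := by
  set μ : Measure ℝ := nu.map x with hμ
  have hxb : ∀ v, |x v| ≤ L := fun v => abs_le.mpr ⟨by linarith [(hr v).1, (hr v).2], (hr v).2⟩
  haveI : IsProbabilityMeasure μ := Measure.isProbabilityMeasure_map hx.aemeasurable
  have hpfx_bd : ∀ (α β : ℝ), |pf x α β * x β| ≤ L := by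
    intro α β
    rw [abs_mul]
    calc |pf x α β| * |x β| ≤ 1 * L :=
      mul_le_mul (pf_abs_le x _ _) (hxb _) (abs_nonneg _) one_pos.le
    _ = L := one_mul _
  have hmeas_pfx : Measurable (Function.uncurry (fun α β => pf x α β * x β)) := by
    have : Function.uncurry (fun α β => pf x α β * x β)
        = fun p : ℝ × ℝ => Function.uncurry (pf x) p * x p.2 := rfl
    rw [this]
    exact (pf_meas hx).mul (hx.comp measurable_snd)
  have hint_pfx : Integrable (Function.uncurry (fun α β => pf x α β * x β)) (nu.prod nu) :=
    int_bdd _ hmeas_pfx (C := L) (fun p => hpfx_bd p.1 p.2)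
  have hint_pf2 : Integrable (Function.uncurry (pf2 x)) (nu.prod nu) := by
    apply int_bdd _ (pf2_meas hx) (C := 1)
    intro p
    show |pf2 x p.1 p.2| ≤ 1
    unfold pf2; split
    · rename_i h
      rw [abs_of_nonneg (sq_nonneg _)]
      exact sq_le_one_of_abs_lt_one h
    · simp
  have hint_xlap : Integrable (fun α => x α * lapFn x α) nu := by
    apply int_bdd _ (hx.mul (lap_meas hx hr)) (C := L)
    intro α
    rw [Pi.mul_apply, abs_mul]
    calc |x α| * |lapFn x α| ≤ L * 1 :=
      mul_le_mul (hxb α) (lap_abs_le hx hr α) (abs_nonneg _) hL.le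
    _ = L := mul_one _
  have hint_lapabs : Integrable (fun α => |lapFn x α|) nu :=
    (int_bdd _ (lap_meas hx hr) (C := 1) (fun α => lap_abs_le hx hr α)).abs
  have hint_B : Integrable (fun α => ∫ β, pf x α β * x β ∂nu) nu := by
    apply int_bdd _ (C := L)
    · exact (StronglyMeasurable.integral_prod_right
        (hmeas_pfx.stronglyMeasurable)).measurable
    · intro α
      exact int_abs_le (fun β => hpfx_bd α β)
  -- step 1 : pointwise identity
  have step1 : ∀ α, ∫ β, pf2 x α β ∂nu
      = x α * lapFn x α - ∫ β, pf x α β * x β ∂nu := by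
    intro α
    have lapeq : lapFn x α = ∫ β, pf x α β ∂nu := lap_eq hx hr α
    rw [lapeq, ← integral_const_mul]
    rw [← integral_sub]
    · congr 1; funext β; unfold pf pf2; split <;> ring
    · apply int_bdd _ (measurable_const.mul (pf_meas1 hx α)) (C := L)
      intro β
      rw [Pi.mul_apply, abs_mul, mul_comm]
      calc |pf x α β| * |x α| ≤ 1 * L :=
        mul_le_mul (pf_abs_le x _ _) (hxb _) (abs_nonneg _) one_pos.le
      _ = L := one_mul _
    · exact int_bdd _ ((pf_meas1 hx α).mul hx) (C := L) (fun β => hpfx_bd α β)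
  -- step 3 : the swapped inner integral
  have step3 : ∀ β, ∫ α, pf x α β * x β ∂nu = -(x β * lapFn x β) := by
    intro β
    rw [integral_mul_const]
    have h1 : ∫ α, pf x α β ∂nu = - lapFn x β := by
      have lapeq : lapFn x β = ∫ α, pf x β α ∂nu := lap_eq hx hr β
      rw [lapeq, ← integral_neg]
      congr 1; funext α; exact pf_antisymm x β α
    rw [h1]; ring
  -- assemble energy identity
  have hE : ∫ α, (∫ β, pf2 x α β ∂nu) ∂nu = 2 * ∫ α, x α * lapFn x α ∂nu := by
    have e1 : ∫ α, (∫ β, pf2 x α β ∂nu) ∂nu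
        = ∫ α, (x α * lapFn x α - ∫ β, pf x α β * x β ∂nu) ∂nu := by
      congr 1; funext α; exact step1 α
    rw [e1, integral_sub hint_xlap hint_B]
    have e2 : ∫ α, (∫ β, pf x α β * x β ∂nu) ∂nu
        = ∫ β, (∫ α, pf x α β * x β ∂nu) ∂nu := integral_integral_swap hint_pfx
    rw [e2]
    have e3 : ∫ β, (∫ α, pf x α β * x β ∂nu) ∂nu = - ∫ β, x β * lapFn x β ∂nu := by
      rw [← integral_neg]; congr 1; funext β; rw [step3 β]
    rw [e3]; ring
  -- bound the energy
  have hEbound : ∫ α, (∫ β, pf2 x α β ∂nu) ∂nu ≤ 4*L*δ := by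
    rw [hE]
    have h2 : ∫ α, x α * lapFn x α ∂nu ≤ L * (2*δ) := by
      calc ∫ α, x α * lapFn x α ∂nu ≤ ∫ α, L * |lapFn x α| ∂nu := by
            apply integral_mono hint_xlap (hint_lapabs.const_mul L)
            intro α
            calc x α * lapFn x α ≤ |x α * lapFn x α| := le_abs_self _
            _ = |x α| * |lapFn x α| := abs_mul _ _
            _ ≤ L * |lapFn x α| := mul_le_mul_of_nonneg_right (hxb α) (abs_nonneg _)
      _ = L * ∫ α, |lapFn x α| ∂nu := integral_const_mul L _
      _ ≤ L * (2*δ) := mul_le_mul_of_nonneg_left hIlap hL.le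
    linarith
  -- move to the product measure and pushforward
  have hprodeq : (μ.prod μ) = Measure.map (Prod.map x x) (nu.prod nu) :=
    Measure.map_prod_map nu nu hx hx
  have hGint : ∫ p, Gfn p ∂(μ.prod μ) = ∫ α, (∫ β, pf2 x α β ∂nu) ∂nu := by
    rw [hprodeq]
    rw [integral_map (hx.prodMap hx).aemeasurable Gfn_meas.aestronglyMeasurable]
    rw [integral_integral hint_pf2]
    rfl
  set Sm : Set (ℝ × ℝ) := {p : ℝ×ℝ | a ≤ |p.1 - p.2| ∧ |p.1 - p.2| < 1} with hSm
  have hSmeas : MeasurableSet Sm := by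
    apply MeasurableSet.inter
    · exact measurableSet_le measurable_const (measurable_fst.sub measurable_snd).abs
    · exact measurableSet_lt (measurable_fst.sub measurable_snd).abs measurable_const
  have hGint_μ : Integrable Gfn (μ.prod μ) := by
    apply int_bdd _ Gfn_meas (C := 1)
    intro p
    unfold Gfn
    split
    · rename_i h
      rw [abs_of_nonneg (sq_nonneg _)]
      exact sq_le_one_of_abs_lt_one h
    · simp
  have hlow : a^2 * ((μ.prod μ) Sm).toReal ≤ ∫ p, Gfn p ∂(μ.prod μ) := by
    have h1 : a^2 * ((μ.prod μ) Sm).toReal ≤ ∫ p in Sm, Gfn p ∂(μ.prod μ) := by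
      apply setIntegral_ge_of_const_le_real hSmeas (measure_ne_top _ _)
      · intro p hp
        obtain ⟨hp1, hp2⟩ := hp
        unfold Gfn
        rw [if_pos hp2]
        calc a^2 ≤ |p.1 - p.2|^2 := pow_le_pow_left₀ ha.le hp1 2
        _ = (p.1 - p.2)^2 := sq_abs _
      · exact hGint_μ.integrableOn
    refine h1.trans ?_
    apply setIntegral_le_integral hGint_μ
    apply Filter.Eventually.of_forall
    intro p
    show (0:ℝ) ≤ Gfn p
    unfold Gfn; split
    · exact sq_nonneg _
    · exact le_rfl
  have hfin : ((μ.prod μ) Sm) ≠ ⊤ := measure_ne_top _ _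
  rw [ENNReal.le_ofReal_iff_toReal_le hfin (by positivity)]
  rw [le_div_iff₀ (by positivity : (0:ℝ) < a^2)]
  calc ((μ.prod μ) Sm).toReal * a^2 = a^2 * ((μ.prod μ) Sm).toReal := by ring
  _ ≤ ∫ p, Gfn p ∂(μ.prod μ) := hlow
  _ = ∫ α, (∫ β, pf2 x α β ∂nu) ∂nu := hGint
  _ ≤ 4*L*δ := hEbound


set_option maxHeartbeats 2000000 in
lemma combinatorial (L : ℝ) (hL : 0 < L) (μ : Measure ℝ) [IsProbabilityMeasure μ]
    (na : ℕ) (hna : 4 ≤ na) (N : ℕ) (hN : L < (N : ℝ) / 2)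
    (θ : ℝ) (hθ : 0 < θ)
    (hμ0 : μ (Set.Iio 0) = 0) (hμL : μ (Set.Ioi L) = 0)
    (hP : (μ.prod μ) {p : ℝ×ℝ | (1/(na:ℝ)) ≤ |p.1 - p.2| ∧ |p.1 - p.2| < 1}
            ≤ ENNReal.ofReal (θ^2/2))
    (hsmall : ((⌊2*(na:ℝ)*L⌋₊ + 1 : ℕ) : ℝ≥0∞) * ENNReal.ofReal θ
        + (N : ℝ≥0∞) * ENNReal.ofReal (θ/2) < 1) :
    ∃ D : Finset ℝ, D.Nonempty ∧ (∀ d ∈ D, d ∈ Set.Icc (0:ℝ) L) ∧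
      (∀ d ∈ D, ∀ d' ∈ D, d = d' ∨ 1 ≤ |d - d'|) ∧
      μ {v | ∀ d ∈ D, 3*(1/(na:ℝ)) < |v - d|}
        ≤ ((⌊2*(na:ℝ)*L⌋₊ + 1 : ℕ) : ℝ≥0∞) * ENNReal.ofReal θ
            + (N : ℝ≥0∞) * ENNReal.ofReal (θ/2) := by
  have hna0 : (0:ℝ) < na := by positivity
  set a : ℝ := 1/(na:ℝ) with haa
  have ha : 0 < a := by positivity
  have ha4 : a ≤ 1/4 := by
    rw [haa, div_le_div_iff₀ hna0 (by norm_num)]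
    have : (4:ℝ) ≤ na := by exact_mod_cast hna
    linarith
  set w2 : ℝ := 2*(na:ℝ) with hw2
  have hw2pos : 0 < w2 := by positivity
  set h : ℝ := 1/w2 with hh
  have hhpos : 0 < h := by positivity
  have hha : h = a/2 := by rw [hh, haa, hw2]; ring
  -- the grid
  set gr : ℝ → ℝ := fun v => (⌊v * w2⌋₊ : ℝ) / w2 with hgr
  have gr_le : ∀ v, 0 ≤ v → gr v ≤ v := by
    intro v hv
    rw [hgr]
    rw [div_le_iff₀ hw2pos]
    exact Nat.floor_le (by positivity)
  have lt_gr : ∀ v, v < gr v + h := by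
    intro v
    have h1 : v * w2 < ⌊v * w2⌋₊ + 1 := Nat.lt_floor_add_one _
    rw [hgr, hh, ← add_div, lt_div_iff₀ hw2pos]
    exact h1
  have gr_nonneg : ∀ v, 0 ≤ gr v := by
    intro v; rw [hgr]; positivity
  have gr_mono : ∀ u v, u ≤ v → gr u ≤ gr v := by
    intro u v huv
    rw [hgr]
    have : ⌊u * w2⌋₊ ≤ ⌊v * w2⌋₊ :=
      Nat.floor_le_floor (mul_le_mul_of_nonneg_right huv hw2pos.le)
    have h2 : ((⌊u * w2⌋₊ : ℝ)) ≤ (⌊v * w2⌋₊ : ℝ) := by exact_mod_cast this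
    show ((⌊u * w2⌋₊ : ℝ)) / w2 ≤ (⌊v * w2⌋₊ : ℝ) / w2
    gcongr
  have gr_fix : ∀ m : ℕ, gr ((m:ℝ)/w2 + 1) = (m:ℝ)/w2 + 1 := by
    intro m
    have key : ((m:ℝ)/w2 + 1) * w2 = ((m + 2*na : ℕ) : ℝ) := by
      push_cast
      field_simp
      rw [hw2]
    rw [hgr]
    simp only [key, Nat.floor_natCast]
    push_cast
    field_simp
    rw [hw2]

  -- the heavy set
  set Hset : Set ℝ := {v | 0 ≤ v ∧ v ≤ L ∧ ENNReal.ofReal θ ≤ μ (Set.Ico (gr v) (gr v + h))}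
    with hHset
  have h2h : 2*h = a := by rw [hha]; ring
  have hθ0 : ENNReal.ofReal θ ≠ 0 := (ENNReal.ofReal_pos.mpr hθ).ne'
  -- band lemma
  have hband : ∀ d₀ t b : ℝ, ENNReal.ofReal θ ≤ μ (Set.Ico d₀ (d₀+a)) →
      d₀ + 2*a ≤ t → b ≤ d₀ + 1 → μ (Set.Ico t b) ≤ ENNReal.ofReal (θ/2) := by
    intro d₀ t b hw ht hb
    rcases le_or_gt b t with hbt | htb
    · rw [Set.Ico_eq_empty (by exact fun hlt => absurd hlt (not_lt.mpr hbt))]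
      simp
    · have hrect : (Set.Ico d₀ (d₀+a)) ×ˢ (Set.Ico t b)
          ⊆ {p : ℝ×ℝ | a ≤ |p.1 - p.2| ∧ |p.1 - p.2| < 1} := by
        rintro ⟨w, v⟩ ⟨⟨hw1, hw2⟩, hv1, hv2⟩
        simp only [Set.mem_Ico] at hw1 hw2 hv1 hv2
        have habs : |w - v| = v - w := by
          rw [abs_sub_comm]; exact abs_of_nonneg (by linarith)
        constructor
        · show a ≤ |w - v|
          rw [habs]; linarith
        · show |w - v| < 1
          rw [habs]; linarith
      have hm : ENNReal.ofReal θ * μ (Set.Ico t b)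
          ≤ ENNReal.ofReal θ * ENNReal.ofReal (θ/2) := by
        calc ENNReal.ofReal θ * μ (Set.Ico t b)
            ≤ μ (Set.Ico d₀ (d₀+a)) * μ (Set.Ico t b) := mul_le_mul_left hw _
        _ = (μ.prod μ) ((Set.Ico d₀ (d₀+a)) ×ˢ (Set.Ico t b)) := (Measure.prod_prod _ _).symm
        _ ≤ (μ.prod μ) {p : ℝ×ℝ | a ≤ |p.1 - p.2| ∧ |p.1 - p.2| < 1} := measure_mono hrect
        _ ≤ ENNReal.ofReal (θ^2/2) := hP
        _ = ENNReal.ofReal θ * ENNReal.ofReal (θ/2) := by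
            rw [← ENNReal.ofReal_mul hθ.le]; ring_nf
      exact (ENNReal.mul_le_mul_iff_right hθ0 ENNReal.ofReal_ne_top).mp hm
  -- dichotomy
  have hdich : ∀ u v, u ∈ Hset → v ∈ Hset → u ≤ v → 2*a ≤ v - u → 1 - a < v - u := by
    intro u v hu hv huv hge
    by_contra hcon
    push_neg at hcon
    obtain ⟨hu0, huL, huw⟩ := hu
    obtain ⟨hv0, hvL, hvw⟩ := hv
    have g1 : gr u ≤ u := gr_le u hu0
    have g2 : u < gr u + h := lt_gr u
    have g3 : gr v ≤ v := gr_le v hv0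
    have g4 : v < gr v + h := lt_gr v
    have hrect : (Set.Ico (gr u) (gr u + h)) ×ˢ (Set.Ico (gr v) (gr v + h))
        ⊆ {p : ℝ×ℝ | a ≤ |p.1 - p.2| ∧ |p.1 - p.2| < 1} := by
      rintro ⟨w, w'⟩ ⟨⟨hw1, hw2⟩, hw1', hw2'⟩
      simp only [Set.mem_Ico] at hw1 hw2 hw1' hw2'
      have habs : |w - w'| = w' - w := by
        rw [abs_sub_comm]; exact abs_of_nonneg (by linarith)
      constructor
      · show a ≤ |w - w'|
        rw [habs]; linarith
      · show |w - w'| < 1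
        rw [habs]; linarith
    have hm : ENNReal.ofReal θ * ENNReal.ofReal θ ≤ ENNReal.ofReal (θ^2/2) := by
      calc ENNReal.ofReal θ * ENNReal.ofReal θ
          ≤ μ (Set.Ico (gr u) (gr u + h)) * μ (Set.Ico (gr v) (gr v + h)) :=
            mul_le_mul' huw hvw
      _ = (μ.prod μ) ((Set.Ico (gr u) (gr u + h)) ×ˢ (Set.Ico (gr v) (gr v + h))) :=
            (Measure.prod_prod _ _).symm
      _ ≤ (μ.prod μ) {p : ℝ×ℝ | a ≤ |p.1 - p.2| ∧ |p.1 - p.2| < 1} := measure_mono hrect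
      _ ≤ ENNReal.ofReal (θ^2/2) := hP
    rw [← ENNReal.ofReal_mul hθ.le] at hm
    rw [ENNReal.ofReal_le_ofReal_iff (by positivity)] at hm
    nlinarith
  -- the main recursion
  have qind : ∀ k : ℕ, ∀ t b : ℝ,
      (b ≤ 0 ∨ ∃ m : ℕ, b = (m:ℝ)/w2 + 1 ∧
        ENNReal.ofReal θ ≤ μ (Set.Ico ((m:ℝ)/w2) ((m:ℝ)/w2 + a)) ∧ (m:ℝ)/w2 + 2*a ≤ t) →
      L < t + (k:ℝ)/2 →
      ∃ D : Finset ℝ, (∀ d ∈ D, b ≤ d ∧ 0 ≤ d ∧ d ≤ L) ∧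
        (∀ d ∈ D, ∀ d' ∈ D, d = d' ∨ 1 ≤ |d - d'|) ∧
        μ {v | t ≤ v ∧ v ∈ Hset ∧ ∀ d ∈ D, 3*a < |v - d|}
          ≤ (k : ENNReal) * ENNReal.ofReal (θ/2) := by
    intro k
    induction k with
    | zero =>
      intro t b _ hfuel
      refine ⟨∅, by simp, by simp, ?_⟩
      have hempty : {v | t ≤ v ∧ v ∈ Hset ∧ ∀ d ∈ (∅ : Finset ℝ), 3*a < |v - d|} = ∅ := by
        rw [Set.eq_empty_iff_forall_notMem]
        rintro v ⟨hvt, hvH, -⟩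
        have : v ≤ L := hvH.2.1
        simp only [Nat.cast_zero] at hfuel
        linarith
      rw [hempty]
      simp
    | succ k ih =>
      intro t b hinv hfuel
      set r : ℝ := max t b with hr
      have hIcotb : μ (Set.Ico t b) ≤ ENNReal.ofReal (θ/2) := by
        rcases hinv with hb0 | ⟨m, hbm, hwit, hmt⟩
        · have hsub0 : Set.Ico t b ⊆ Set.Iio 0 := by
            intro z hz; exact lt_of_lt_of_le hz.2 hb0
          calc μ (Set.Ico t b) ≤ μ (Set.Iio 0) := measure_mono hsub0
          _ = 0 := hμ0
          _ ≤ _ := zero_le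
        · exact hband _ _ _ hwit hmt (le_of_eq hbm)
      have honele : (1 : ENNReal) ≤ ((k+1 : ℕ) : ENNReal) := by
        exact_mod_cast Nat.one_le_iff_ne_zero.mpr (Nat.succ_ne_zero k)
      by_cases hne : (Hset ∩ Set.Ici r).Nonempty
      · -- main branch
        have hbdd : BddBelow (Hset ∩ Set.Ici r) := ⟨r, fun z hz => hz.2⟩
        set c : ℝ := sInf (Hset ∩ Set.Ici r) with hc
        have hcr : r ≤ c := le_csInf hne (fun z hz => hz.2)
        have hnecopy := hne
        obtain ⟨z0, hz0⟩ := hnecopy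
        have hcL : c ≤ L := le_trans (csInf_le hbdd hz0) hz0.1.2.1
        have hexu : ∃ u, (u ∈ Hset ∩ Set.Ici r) ∧ u < c + h := by
          by_contra hno
          push_neg at hno
          have : c + h ≤ c := le_csInf hne hno
          linarith
        obtain ⟨u, hu, hult⟩ := hexu
        have hcu : c ≤ u := csInf_le hbdd hu
        have hu0 : 0 ≤ u := hu.1.1
        have huL : u ≤ L := hu.1.2.1
        set m : ℕ := ⌊u * w2⌋₊ with hm
        set d : ℝ := (m:ℝ)/w2 with hd
        have hdgr : d = gr u := by rw [hd, hgr]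
        have hdu : d ≤ u := by rw [hdgr]; exact gr_le u hu0
        have hud : u < d + h := by rw [hdgr]; exact lt_gr u
        have hd0 : 0 ≤ d := by rw [hd]; positivity
        have hdL : d ≤ L := le_trans hdu huL
        have hbd : b ≤ d := by
          rcases hinv with hb0 | ⟨m', hbm', _, _⟩
          · linarith
          · have hbu : b ≤ u := le_trans (le_max_right t b) hu.2
            have : gr b ≤ gr u := gr_mono b u hbu
            rw [hbm'] at this ⊢
            rw [gr_fix m'] at this
            rw [← hdgr] at this
            exact le_trans (le_of_eq rfl) this
        have hwitd : ENNReal.ofReal θ ≤ μ (Set.Ico d (d + a)) := by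
          have hsub : Set.Ico (gr u) (gr u + h) ⊆ Set.Ico d (d + a) := by
            rw [← hdgr]
            apply Set.Ico_subset_Ico_right
            linarith
          exact le_trans hu.1.2.2 (measure_mono hsub)
        set t' : ℝ := c + 1 - a with ht'
        set b' : ℝ := d + 1 with hb'
        have hinv' : b' ≤ 0 ∨ ∃ m' : ℕ, b' = (m':ℝ)/w2 + 1 ∧
            ENNReal.ofReal θ ≤ μ (Set.Ico ((m':ℝ)/w2) ((m':ℝ)/w2 + a)) ∧
            (m':ℝ)/w2 + 2*a ≤ t' := by
          right
          refine ⟨m, by rw [hb', hd], ?_, ?_⟩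
          · rw [← hd]; exact hwitd
          · rw [← hd, ht']
            linarith
        have hfuel' : L < t' + (k:ℝ)/2 := by
          have hcast : ((k+1 : ℕ) : ℝ) = (k:ℝ) + 1 := by push_cast; ring
          rw [hcast] at hfuel
          have htr : t ≤ r := le_max_left t b
          rw [ht']
          have ha2 : a ≤ 1/2 := by linarith
          linarith
        obtain ⟨D', hD'mem, hD'sep, hD'far⟩ := ih t' b' hinv' hfuel'
        refine ⟨insert d D', ?_, ?_, ?_⟩
        · intro d₀ hd₀
          rcases Finset.mem_insert.mp hd₀ with rfl | hd₀'
          · exact ⟨hbd, hd0, hdL⟩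
          · obtain ⟨h1, h2, h3⟩ := hD'mem d₀ hd₀'
            refine ⟨?_, h2, h3⟩
            have : b' ≤ d₀ := h1
            rw [hb'] at this
            linarith
        · intro d₀ hd₀ d₁ hd₁
          rcases Finset.mem_insert.mp hd₀ with rfl | hd₀' <;>
            rcases Finset.mem_insert.mp hd₁ with rfl | hd₁'
          · exact Or.inl rfl
          · right
            have h1 : b' ≤ d₁ := (hD'mem d₁ hd₁').1
            rw [hb'] at h1
            rw [abs_sub_comm, abs_of_nonneg (by linarith)]
            linarith
          · right
            have h1 : b' ≤ d₀ := (hD'mem d₀ hd₀').1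
            rw [hb'] at h1
            rw [abs_of_nonneg (by linarith)]
            linarith
          · exact hD'sep d₀ hd₀' d₁ hd₁'
        · have hsub : {v | t ≤ v ∧ v ∈ Hset ∧ ∀ d₀ ∈ insert d D', 3*a < |v - d₀|}
              ⊆ Set.Ico t b ∪ {v | t' ≤ v ∧ v ∈ Hset ∧ ∀ d₀ ∈ D', 3*a < |v - d₀|} := by
            rintro v ⟨hvt, hvH, hvfar⟩
            by_cases hvb : v < b
            · exact Or.inl ⟨hvt, hvb⟩
            · right
              push_neg at hvb
              have hvr : v ∈ Hset ∩ Set.Ici r := ⟨hvH, max_le hvt hvb⟩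
              have hvc : c ≤ v := csInf_le hbdd hvr
              have hfar_d : 3*a < |v - d| := hvfar d (Finset.mem_insert_self d D')
              rcases le_or_gt v u with hvu | huv
              · exfalso
                have : |v - d| < 3*a := by
                  rw [abs_lt]
                  constructor
                  · linarith
                  · linarith
                linarith
              · rcases lt_or_ge (v - u) (2*a) with hlt | hge2
                · exfalso
                  have : |v - d| < 3*a := by
                    rw [abs_lt]
                    constructor
                    · linarith
                    · linarith
                  linarith
                · have h1a : 1 - a < v - u := hdich u v hu.1 hvH (le_of_lt huv) hge2
                  have hvt' : t' ≤ v := by rw [ht']; linarith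
                  exact ⟨hvt', hvH, fun d₀ hd₀ => hvfar d₀ (Finset.mem_insert_of_mem hd₀)⟩
          calc μ {v | t ≤ v ∧ v ∈ Hset ∧ ∀ d₀ ∈ insert d D', 3*a < |v - d₀|}
              ≤ μ (Set.Ico t b ∪ {v | t' ≤ v ∧ v ∈ Hset ∧ ∀ d₀ ∈ D', 3*a < |v - d₀|}) :=
                measure_mono hsub
          _ ≤ μ (Set.Ico t b) + μ {v | t' ≤ v ∧ v ∈ Hset ∧ ∀ d₀ ∈ D', 3*a < |v - d₀|} :=
                measure_union_le _ _
          _ ≤ ENNReal.ofReal (θ/2) + (k : ENNReal) * ENNReal.ofReal (θ/2) :=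
                add_le_add hIcotb hD'far
          _ = ((k+1 : ℕ) : ENNReal) * ENNReal.ofReal (θ/2) := by
                push_cast
                ring
      · -- no heavy points above r
        refine ⟨∅, by simp, by simp, ?_⟩
        have hsub : {v | t ≤ v ∧ v ∈ Hset ∧ ∀ d ∈ (∅ : Finset ℝ), 3*a < |v - d|}
            ⊆ Set.Ico t b := by
          rintro v ⟨hvt, hvH, -⟩
          by_cases hvb : v < b
          · exact ⟨hvt, hvb⟩
          · exfalso
            push_neg at hvb
            exact hne ⟨v, hvH, max_le hvt hvb⟩
        calc μ {v | t ≤ v ∧ v ∈ Hset ∧ ∀ d ∈ (∅ : Finset ℝ), 3*a < |v - d|}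
            ≤ μ (Set.Ico t b) := measure_mono hsub
        _ ≤ ENNReal.ofReal (θ/2) := hIcotb
        _ = 1 * ENNReal.ofReal (θ/2) := (one_mul _).symm
        _ ≤ ((k+1 : ℕ) : ENNReal) * ENNReal.ofReal (θ/2) :=
              mul_le_mul_left honele _
  -- apply the recursion
  obtain ⟨D, hDmem, hDsep, hDfar⟩ := qind N 0 0 (Or.inl le_rfl) (by simpa using hN)
  -- the light part
  set M : ℕ := ⌊2*(na:ℝ)*L⌋₊ with hM
  set Tset : ℕ → Set ℝ := fun j =>
    if μ (Set.Ico ((j:ℝ)/w2) ((j:ℝ)/w2 + h)) < ENNReal.ofReal θ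
    then Set.Ico ((j:ℝ)/w2) ((j:ℝ)/w2 + h) else ∅ with hTset
  have hΛ : μ {v | (0 ≤ v ∧ v ≤ L) ∧ v ∉ Hset}
      ≤ ((M+1 : ℕ) : ENNReal) * ENNReal.ofReal θ := by
    have hcover : {v | (0 ≤ v ∧ v ≤ L) ∧ v ∉ Hset}
        ⊆ ⋃ j ∈ Finset.range (M+1), Tset j := by
      rintro v ⟨⟨hv0, hvL⟩, hvH⟩
      have hlight : μ (Set.Ico (gr v) (gr v + h)) < ENNReal.ofReal θ := by
        by_contra hcon
        push_neg at hcon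
        exact hvH ⟨hv0, hvL, hcon⟩
      set j : ℕ := ⌊v * w2⌋₊ with hj
      have hjgr : (j:ℝ)/w2 = gr v := by rw [hj, hgr]
      have hjM : j < M + 1 := by
        have h1 : v * w2 ≤ 2*(na:ℝ)*L := by
          rw [hw2]
          nlinarith
        have := Nat.floor_le_floor h1
        rw [hM]
        omega
      apply Set.mem_biUnion (Finset.mem_range.mpr hjM)
      rw [hTset]
      simp only
      rw [hjgr, if_pos hlight]
      exact ⟨le_of_eq rfl |>.trans (gr_le v hv0), lt_gr v⟩
    calc μ {v | (0 ≤ v ∧ v ≤ L) ∧ v ∉ Hset}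
        ≤ μ (⋃ j ∈ Finset.range (M+1), Tset j) := measure_mono hcover
    _ ≤ ∑ j ∈ Finset.range (M+1), μ (Tset j) := measure_biUnion_finset_le _ _
    _ ≤ ∑ _j ∈ Finset.range (M+1), ENNReal.ofReal θ := by
        apply Finset.sum_le_sum
        intro j _
        rw [hTset]
        simp only
        split
        · rename_i hsp; exact le_of_lt hsp
        · simp
    _ = ((M+1 : ℕ) : ENNReal) * ENNReal.ofReal θ := by
        rw [Finset.sum_const, Finset.card_range, nsmul_eq_mul]
  -- assemble
  have hDne : D.Nonempty := by
    by_contra hDe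
    rw [Finset.not_nonempty_iff_eq_empty] at hDe
    have huniv : {v : ℝ | ∀ d ∈ D, 3*a < |v - d|} = Set.univ := by
      rw [hDe]; simp
    have h1 : (1 : ENNReal) ≤ ((M+1 : ℕ) : ENNReal) * ENNReal.ofReal θ
        + (N : ENNReal) * ENNReal.ofReal (θ/2) := by
      have hTS : μ {v : ℝ | ∀ d ∈ D, 3*a < |v - d|} = 1 := by
        rw [huniv]; exact measure_univ
      rw [← hTS]
      have hsub : {v : ℝ | ∀ d ∈ D, 3*a < |v - d|}
          ⊆ Set.Iio 0 ∪ Set.Ioi L ∪ {v | (0 ≤ v ∧ v ≤ L) ∧ v ∉ Hset}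
            ∪ {v | (0:ℝ) ≤ v ∧ v ∈ Hset ∧ ∀ d ∈ D, 3*a < |v - d|} := by
        intro v hv
        rcases lt_or_ge v 0 with h0 | h0
        · exact Or.inl (Or.inl (Or.inl h0))
        rcases lt_or_ge L v with hL' | hL'
        · exact Or.inl (Or.inl (Or.inr hL'))
        by_cases hH : v ∈ Hset
        · exact Or.inr ⟨h0, hH, hv⟩
        · exact Or.inl (Or.inr ⟨⟨h0, hL'⟩, hH⟩)
      calc μ {v : ℝ | ∀ d ∈ D, 3*a < |v - d|}
          ≤ μ (Set.Iio 0 ∪ Set.Ioi L ∪ {v | (0 ≤ v ∧ v ≤ L) ∧ v ∉ Hset}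
              ∪ {v | (0:ℝ) ≤ v ∧ v ∈ Hset ∧ ∀ d ∈ D, 3*a < |v - d|}) := measure_mono hsub
      _ ≤ μ (Set.Iio 0 ∪ Set.Ioi L ∪ {v | (0 ≤ v ∧ v ≤ L) ∧ v ∉ Hset})
              + μ {v | (0:ℝ) ≤ v ∧ v ∈ Hset ∧ ∀ d ∈ D, 3*a < |v - d|} := measure_union_le _ _
      _ ≤ (μ (Set.Iio 0 ∪ Set.Ioi L) + μ {v | (0 ≤ v ∧ v ≤ L) ∧ v ∉ Hset})
              + μ {v | (0:ℝ) ≤ v ∧ v ∈ Hset ∧ ∀ d ∈ D, 3*a < |v - d|} := by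
            gcongr
            exact measure_union_le _ _
      _ ≤ ((μ (Set.Iio 0) + μ (Set.Ioi L)) + μ {v | (0 ≤ v ∧ v ≤ L) ∧ v ∉ Hset})
              + μ {v | (0:ℝ) ≤ v ∧ v ∈ Hset ∧ ∀ d ∈ D, 3*a < |v - d|} := by
            gcongr
            exact measure_union_le _ _
      _ ≤ ((0 + 0) + ((M+1 : ℕ) : ENNReal) * ENNReal.ofReal θ)
              + (N : ENNReal) * ENNReal.ofReal (θ/2) := by
            exact add_le_add (add_le_add (add_le_add (le_of_eq hμ0) (le_of_eq hμL)) hΛ) hDfar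
      _ = ((M+1 : ℕ) : ENNReal) * ENNReal.ofReal θ + (N : ENNReal) * ENNReal.ofReal (θ/2) := by
            simp
    rw [hM] at h1
    exact absurd (lt_of_le_of_lt h1 hsmall) (lt_irrefl _)
  refine ⟨D, hDne, ?_, hDsep, ?_⟩
  · intro d hd
    obtain ⟨_, h2, h3⟩ := hDmem d hd
    exact Set.mem_Icc.mpr ⟨h2, h3⟩
  · have hsub : {v : ℝ | ∀ d ∈ D, 3*(1/(na:ℝ)) < |v - d|}
        ⊆ Set.Iio 0 ∪ Set.Ioi L ∪ {v | (0 ≤ v ∧ v ≤ L) ∧ v ∉ Hset}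
          ∪ {v | (0:ℝ) ≤ v ∧ v ∈ Hset ∧ ∀ d ∈ D, 3*a < |v - d|} := by
      intro v hv
      rcases lt_or_ge v 0 with h0 | h0
      · exact Or.inl (Or.inl (Or.inl h0))
      rcases lt_or_ge L v with hL' | hL'
      · exact Or.inl (Or.inl (Or.inr hL'))
      by_cases hH : v ∈ Hset
      · exact Or.inr ⟨h0, hH, hv⟩
      · exact Or.inl (Or.inr ⟨⟨h0, hL'⟩, hH⟩)
    calc μ {v : ℝ | ∀ d ∈ D, 3*(1/(na:ℝ)) < |v - d|}
        ≤ μ (Set.Iio 0 ∪ Set.Ioi L ∪ {v | (0 ≤ v ∧ v ≤ L) ∧ v ∉ Hset}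
            ∪ {v | (0:ℝ) ≤ v ∧ v ∈ Hset ∧ ∀ d ∈ D, 3*a < |v - d|}) := measure_mono hsub
    _ ≤ μ (Set.Iio 0 ∪ Set.Ioi L ∪ {v | (0 ≤ v ∧ v ≤ L) ∧ v ∉ Hset})
            + μ {v | (0:ℝ) ≤ v ∧ v ∈ Hset ∧ ∀ d ∈ D, 3*a < |v - d|} := measure_union_le _ _
    _ ≤ (μ (Set.Iio 0 ∪ Set.Ioi L) + μ {v | (0 ≤ v ∧ v ≤ L) ∧ v ∉ Hset})
            + μ {v | (0:ℝ) ≤ v ∧ v ∈ Hset ∧ ∀ d ∈ D, 3*a < |v - d|} := by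
          gcongr
          exact measure_union_le _ _
    _ ≤ ((μ (Set.Iio 0) + μ (Set.Ioi L)) + μ {v | (0 ≤ v ∧ v ≤ L) ∧ v ∉ Hset})
            + μ {v | (0:ℝ) ≤ v ∧ v ∈ Hset ∧ ∀ d ∈ D, 3*a < |v - d|} := by
          gcongr
          exact measure_union_le _ _
    _ ≤ ((0 + 0) + ((M+1 : ℕ) : ENNReal) * ENNReal.ofReal θ)
            + (N : ENNReal) * ENNReal.ofReal (θ/2) := by
          exact add_le_add (add_le_add (add_le_add (le_of_eq hμ0) (le_of_eq hμL)) hΛ) hDfar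
    _ = ((⌊2*(na:ℝ)*L⌋₊+1 : ℕ) : ENNReal) * ENNReal.ofReal θ
            + (N : ENNReal) * ENNReal.ofReal (θ/2) := by
          rw [hM]; simp



lemma ilap_le {x : ℝ → ℝ} (hx : Measurable x) {L δ : ℝ} (hL : 0 < L)
    (hr : ∀ v, x v ∈ Set.Icc 0 L) (hδ : 0 < δ)
    (hbad : volume {α ∈ Set.Icc (0:ℝ) 1 | δ ≤ |lapFn x α|} < ENNReal.ofReal δ) :
    ∫ α, |lapFn x α| ∂nu ≤ 2*δ := by
  set Bad : Set ℝ := {α | δ ≤ |lapFn x α|} with hB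
  have hBmeas : MeasurableSet Bad :=
    measurableSet_le measurable_const (lap_meas hx hr).abs
  have hint1 : Integrable (fun α => |lapFn x α|) nu :=
    (int_bdd _ (lap_meas hx hr) (C := 1) (fun α => lap_abs_le hx hr α)).abs
  have hint2 : Integrable (fun α => δ + Bad.indicator (fun _ => (1:ℝ)) α) nu := by
    apply Integrable.add (integrable_const δ)
    apply int_bdd _ (measurable_one.indicator hBmeas) (C := 1)
    intro α
    by_cases hα : α ∈ Bad
    · rw [Set.indicator_of_mem hα]; simp
    · rw [Set.indicator_of_notMem hα]; simp
  have hpt : ∀ α, |lapFn x α| ≤ δ + Bad.indicator (fun _ => (1:ℝ)) α := by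
    intro α
    by_cases hα : α ∈ Bad
    · rw [Set.indicator_of_mem hα]
      linarith [lap_abs_le hx hr α]
    · rw [Set.indicator_of_notMem hα]
      rw [hB, Set.mem_setOf_eq, not_le] at hα
      linarith
  have hBvol : (nu Bad).toReal ≤ δ := by
    have h1 : nu Bad = volume (Bad ∩ Set.Icc (0:ℝ) 1) := by
      rw [nu]; exact Measure.restrict_apply hBmeas
    have h2 : Bad ∩ Set.Icc (0:ℝ) 1 = {α ∈ Set.Icc (0:ℝ) 1 | δ ≤ |lapFn x α|} := by
      ext α; rw [hB]; constructor
      · rintro ⟨h1', h2'⟩; exact ⟨h2', h1'⟩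
      · rintro ⟨h1', h2'⟩; exact ⟨h2', h1'⟩
    rw [h1, h2]
    exact ENNReal.toReal_le_of_le_ofReal hδ.le (le_of_lt hbad)
  calc ∫ α, |lapFn x α| ∂nu ≤ ∫ α, (δ + Bad.indicator (fun _ => (1:ℝ)) α) ∂nu :=
        integral_mono hint1 hint2 hpt
  _ = δ + (nu Bad).toReal := by
      rw [integral_add (integrable_const δ) (hint2.sub (integrable_const δ) |>.congr ?_)]
      · rw [integral_const, integral_indicator hBmeas]
        simp [measure_univ]
        rfl
      · apply Filter.Eventually.of_forall
        intro α
        simp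
  _ ≤ δ + δ := by linarith
  _ = 2*δ := by ring

set_option maxHeartbeats 4000000 in
lemma part1core (L : ℝ) (hL : 0 < L) :
    ∀ ε > (0 : ℝ), ∃ δ > (0 : ℝ), ∀ x : ℝ → ℝ, Measurable x →
      (∀ v, x v ∈ Set.Icc (0 : ℝ) L) →
      volume {α ∈ Set.Icc (0 : ℝ) 1 | δ ≤ |lapFn x α|} < ENNReal.ofReal δ →
      ∃ s ∈ Fset L,
        volume {α ∈ Set.Icc (0 : ℝ) 1 | ε ≤ |x α - s α|} < ENNReal.ofReal ε := by
  intro ε hε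
  set e : ℝ := min ε 1 with hee
  have he : 0 < e := lt_min hε one_pos
  have he1 : e ≤ 1 := min_le_right _ _
  have heε : e ≤ ε := min_le_left _ _
  set N : ℕ := ⌊2*L⌋₊ + 4 with hN
  have hNbig : L < (N:ℝ)/2 := by
    have h1 : 2*L < (⌊2*L⌋₊ : ℝ) + 1 := Nat.lt_floor_add_one _
    have h2 : ((⌊2*L⌋₊ + 4 : ℕ) : ℝ) = (⌊2*L⌋₊ : ℝ) + 4 := by push_cast; ring
    rw [hN, h2]
    linarith
  set na : ℕ := ⌈(100*((N:ℝ)+2))/e⌉₊ with hna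
  have hcrude : (4:ℝ) ≤ (100*((N:ℝ)+2))/e := by
    have h1 : (100*((N:ℝ)+2)) ≥ 200 := by
      have : (0:ℝ) ≤ (N:ℝ) := Nat.cast_nonneg N
      linarith
    rw [le_div_iff₀ he]
    nlinarith
  have hna4 : 4 ≤ na := by
    have := Nat.le_ceil ((100*((N:ℝ)+2))/e)
    have h4 : (4:ℝ) ≤ (na:ℝ) := le_trans hcrude this
    exact_mod_cast h4
  have hna0 : (0:ℝ) < na := by
    have : (4:ℝ) ≤ (na:ℝ) := by exact_mod_cast hna4
    linarith
  set a : ℝ := 1/(na:ℝ) with haa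
  have ha : 0 < a := by positivity
  have hana : (na:ℝ) * a = 1 := by rw [haa]; field_simp
  have haE : a * (100*((N:ℝ)+2)) ≤ e := by
    have h1 : (100*((N:ℝ)+2))/e ≤ (na:ℝ) := Nat.le_ceil _
    rw [div_le_iff₀ he] at h1
    rw [haa, div_mul_eq_mul_div, one_mul, div_le_iff₀ hna0]
    linarith [mul_comm ((na:ℝ)) e]
  have hNpos : (0:ℝ) < (N:ℝ)+2 := by positivity
  have ha3e : 3*a < e := by
    nlinarith
  set θ : ℝ := e*a/(8*(L+1)) with hθθ
  have hθ : 0 < θ := by rw [hθθ]; positivity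
  set δ : ℝ := θ^2*a^2/(8*(L+1)) with hδδ
  have hδ : 0 < δ := by rw [hδδ]; positivity
  refine ⟨δ, hδ, ?_⟩
  intro x hx hr hbad
  haveI : IsProbabilityMeasure (nu.map x) := Measure.isProbabilityMeasure_map hx.aemeasurable
  have hIlap : ∫ α, |lapFn x α| ∂nu ≤ 2*δ := ilap_le hx hL hr hδ hbad
  have hP0 := medium_bound hx hL hr ha hδ hIlap
  have hP : ((nu.map x).prod (nu.map x)) {p : ℝ×ℝ | a ≤ |p.1 - p.2| ∧ |p.1 - p.2| < 1}
      ≤ ENNReal.ofReal (θ^2/2) := by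
    refine le_trans hP0 (ENNReal.ofReal_le_ofReal ?_)
    have hL1 : (0:ℝ) < L + 1 := by linarith
    have hstep : 4*L*δ/a^2 = θ^2 * (4*L/(8*(L+1))) := by
      rw [hδδ]; field_simp
    rw [hstep]
    have hfrac : 4*L/(8*(L+1)) ≤ 1/2 := by
      rw [div_le_div_iff₀ (by linarith) (by norm_num)]
      linarith
    calc θ^2 * (4*L/(8*(L+1))) ≤ θ^2 * (1/2) :=
          mul_le_mul_of_nonneg_left hfrac (sq_nonneg θ)
    _ = θ^2/2 := by ring
  have hμ0 : (nu.map x) (Set.Iio 0) = 0 := by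
    rw [Measure.map_apply hx measurableSet_Iio]
    have : x ⁻¹' (Set.Iio 0) = ∅ := by
      rw [Set.eq_empty_iff_forall_notMem]
      intro v hv
      exact absurd (hr v).1 (not_le.mpr hv)
    rw [this]
    simp
  have hμL : (nu.map x) (Set.Ioi L) = 0 := by
    rw [Measure.map_apply hx measurableSet_Ioi]
    have : x ⁻¹' (Set.Ioi L) = ∅ := by
      rw [Set.eq_empty_iff_forall_notMem]
      intro v hv
      exact absurd (hr v).2 (not_le.mpr hv)
    rw [this]
    simp
  -- numeric bound for the final sum
  set M : ℕ := ⌊2*(na:ℝ)*L⌋₊ with hM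
  have hMR : ((M+1:ℕ):ℝ) * θ ≤ e/4 := by
    have h1 : (M:ℝ) ≤ 2*(na:ℝ)*L := Nat.floor_le (by positivity)
    have h2 : ((M+1:ℕ):ℝ) = (M:ℝ) + 1 := by push_cast; ring
    have ha1 : a ≤ 1 := by
      have h4 : (4:ℝ) ≤ (na:ℝ) := by exact_mod_cast hna4
      rw [haa, div_le_one hna0]
      linarith
    have hMa : ((M:ℝ)+1)*a ≤ 2*(L+1) := by
      nlinarith [mul_le_mul_of_nonneg_right h1 ha.le]
    have hstep : ((M:ℝ)+1) * θ = (((M:ℝ)+1)*a)*e/(8*(L+1)) := by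
      rw [hθθ]; ring
    rw [h2, hstep, div_le_div_iff₀ (by positivity) (by norm_num)]
    nlinarith [mul_le_mul_of_nonneg_right hMa he.le]
  have hNR : (N:ℝ)*(θ/2) ≤ e/4 := by
    have hNN : (0:ℝ) ≤ (N:ℝ) := Nat.cast_nonneg N
    have hL1 : (1:ℝ) ≤ L + 1 := by linarith
    have hae' : (N:ℝ)*a ≤ e := by nlinarith [haE, ha.le]
    have hstep : (N:ℝ)*(θ/2) = ((N:ℝ)*a)*e/(16*(L+1)) := by
      rw [hθθ]
      field_simp
      ring
    rw [hstep, div_le_div_iff₀ (by positivity) (by norm_num)]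
    nlinarith [mul_le_mul_of_nonneg_right hae' he.le,
      mul_le_mul_of_nonneg_left he1 he.le]
  have hbound : ((M+1 : ℕ) : ENNReal) * ENNReal.ofReal θ
      + (N : ENNReal) * ENNReal.ofReal (θ/2) ≤ ENNReal.ofReal (e/2) := by
    have e1 : ((M+1 : ℕ) : ENNReal) * ENNReal.ofReal θ = ENNReal.ofReal (((M+1:ℕ):ℝ) * θ) := by
      rw [ENNReal.ofReal_mul (by positivity)]
      congr 1
      exact (ENNReal.ofReal_natCast _).symm
    have e2 : (N : ENNReal) * ENNReal.ofReal (θ/2) = ENNReal.ofReal ((N:ℝ) * (θ/2)) := by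
      rw [ENNReal.ofReal_mul (Nat.cast_nonneg N)]
      congr 1
      exact (ENNReal.ofReal_natCast _).symm
    rw [e1, e2, ← ENNReal.ofReal_add (by positivity) (by positivity)]
    apply ENNReal.ofReal_le_ofReal
    linarith
  have hsmall : ((⌊2*(na:ℝ)*L⌋₊ + 1 : ℕ) : ENNReal) * ENNReal.ofReal θ
      + (N : ENNReal) * ENNReal.ofReal (θ/2) < 1 := by
    rw [← hM]
    refine lt_of_le_of_lt hbound ?_
    rw [← ENNReal.ofReal_one]
    apply ENNReal.ofReal_lt_ofReal_iff_of_nonneg (by positivity) |>.mpr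
    linarith
  have hPa : ((nu.map x).prod (nu.map x)) {p : ℝ×ℝ | (1/(na:ℝ)) ≤ |p.1 - p.2| ∧ |p.1 - p.2| < 1}
      ≤ ENNReal.ofReal (θ^2/2) := by rw [← haa]; exact hP
  obtain ⟨D, hDne, hDIcc, hDsep, hDfar⟩ :=
    combinatorial L hL (nu.map x) na hna4 N hNbig θ hθ hμ0 hμL hPa hsmall
  -- build the step function
  set g : ℝ → ℝ := fun v =>
    if hnon : (D.filter (fun d' => d' ≤ v + 3*a)).Nonempty
    then (D.filter (fun d' => d' ≤ v + 3*a)).max' hnon else D.min' hDne with hg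
  have hgD : ∀ v, g v ∈ D := by
    intro v
    rw [hg]
    dsimp only
    split
    · rename_i hnon
      exact Finset.mem_of_mem_filter _ ((D.filter _).max'_mem hnon)
    · exact D.min'_mem hDne
  have hgmono : Monotone g := by
    intro v v' hvv'
    have hsubf : D.filter (fun d' => d' ≤ v + 3*a) ⊆ D.filter (fun d' => d' ≤ v' + 3*a) := by
      intro z hz
      rw [Finset.mem_filter] at hz ⊢
      exact ⟨hz.1, by linarith [hz.2]⟩
    rw [hg]
    dsimp only
    split
    · rename_i hnon
      have hnon' : (D.filter (fun d' => d' ≤ v' + 3*a)).Nonempty := by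
        obtain ⟨z, hz⟩ := hnon
        exact ⟨z, hsubf hz⟩
      rw [dif_pos hnon']
      exact Finset.max'_subset _ hsubf
    · split
      · rename_i hnon'
        apply Finset.min'_le
        exact Finset.mem_of_mem_filter _ ((D.filter _).max'_mem hnon')
      · exact le_refl _
  have hgnear : ∀ v d₀, d₀ ∈ D → |v - d₀| ≤ 3*a → |v - g v| ≤ 3*a := by
    intro v d₀ hd₀ hnear
    obtain ⟨h1', h2'⟩ := abs_le.mp hnear
    have hd₀f : d₀ ∈ D.filter (fun d' => d' ≤ v + 3*a) :=
      Finset.mem_filter.mpr ⟨hd₀, by linarith⟩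
    have hnon : (D.filter (fun d' => d' ≤ v + 3*a)).Nonempty := ⟨d₀, hd₀f⟩
    rw [hg]
    dsimp only
    rw [dif_pos hnon]
    set mx := (D.filter (fun d' => d' ≤ v + 3*a)).max' hnon with hmx
    have hup : mx ≤ v + 3*a :=
      (Finset.mem_filter.mp ((D.filter _).max'_mem hnon)).2
    have hlo : d₀ ≤ mx := Finset.le_max' _ d₀ hd₀f
    rw [abs_le]
    constructor <;> linarith
  refine ⟨fun α => g (x α), ⟨(hgmono.measurable).comp hx,
    fun α _ => hDIcc _ (hgD (x α)),
    fun α _ β _ => hDsep _ (hgD (x α)) _ (hgD (x β))⟩, ?_⟩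
  -- the final measure bound
  set W : Set ℝ := {v | ∀ d ∈ D, 3*a < |v - d|} with hW
  have hWmeas : MeasurableSet W := by
    have : W = ⋂ d ∈ D, {v : ℝ | 3*a < |v - d|} := by
      ext v; simp [hW]
    rw [this]
    apply MeasurableSet.biInter (D : Set ℝ).to_countable
    intro d _
    exact measurableSet_lt measurable_const ((measurable_id.sub measurable_const).abs)
  have hsub : {α ∈ Set.Icc (0:ℝ) 1 | ε ≤ |x α - g (x α)|} ⊆ (x ⁻¹' W) ∩ Set.Icc (0:ℝ) 1 := by
    rintro α ⟨hα, hαfar⟩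
    refine ⟨?_, hα⟩
    show x α ∈ W
    rw [hW, Set.mem_setOf_eq]
    intro d hd
    by_contra hcon
    push_neg at hcon
    have := hgnear (x α) d hd hcon
    have h3 : |x α - g (x α)| < ε := lt_of_le_of_lt this (lt_of_lt_of_le ha3e heε)
    linarith
  calc volume {α ∈ Set.Icc (0:ℝ) 1 | ε ≤ |x α - g (x α)|}
      ≤ volume ((x ⁻¹' W) ∩ Set.Icc (0:ℝ) 1) := measure_mono hsub
  _ = nu (x ⁻¹' W) := by rw [nu, Measure.restrict_apply (hx hWmeas)]
  _ = (nu.map x) W := (Measure.map_apply hx hWmeas).symm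
  _ ≤ ((⌊2*(na:ℝ)*L⌋₊ + 1 : ℕ) : ENNReal) * ENNReal.ofReal θ
        + (N : ENNReal) * ENNReal.ofReal (θ/2) := by
      exact hDfar
  _ ≤ ENNReal.ofReal (e/2) := by rw [← hM]; exact hbound
  _ < ENNReal.ofReal ε := by
      apply ENNReal.ofReal_lt_ofReal_iff hε |>.mpr
      linarith

end HK

set_option maxHeartbeats 4000000 in
/-- For every `ε > 0` there is `δ > 0` such that any
`x ∈ X_L` with `|L_x x| <_μ δ` is within `<_μ ε` of some `s ∈ F`; in
particular, if `L_x x = 0` a.e. then `x` agrees a.e. with an element of `F`. -/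
theorem lap_small_implies_near_F (L : ℝ) (hL : 0 < L) :
    (∀ ε > (0 : ℝ), ∃ δ > (0 : ℝ), ∀ x : ℝ → ℝ, Measurable x →
      (∀ α ∈ Set.Icc (0 : ℝ) 1, x α ∈ Set.Icc (0 : ℝ) L) →
      volume {α ∈ Set.Icc (0 : ℝ) 1 | δ ≤ |lapFn x α|} < ENNReal.ofReal δ →
      ∃ s ∈ Fset L,
        volume {α ∈ Set.Icc (0 : ℝ) 1 | ε ≤ |x α - s α|} < ENNReal.ofReal ε) ∧
    (∀ x : ℝ → ℝ, Measurable x →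
      (∀ α ∈ Set.Icc (0 : ℝ) 1, x α ∈ Set.Icc (0 : ℝ) L) →
      (∀ᵐ α ∂(volume.restrict (Set.Icc (0 : ℝ) 1)), lapFn x α = 0) →
      ∃ s ∈ Fset L,
        ∀ᵐ α ∂(volume.restrict (Set.Icc (0 : ℝ) 1)), x α = s α) := by
  have part1 : ∀ ε > (0 : ℝ), ∃ δ > (0 : ℝ), ∀ x : ℝ → ℝ, Measurable x →
      (∀ α ∈ Set.Icc (0 : ℝ) 1, x α ∈ Set.Icc (0 : ℝ) L) →
      volume {α ∈ Set.Icc (0 : ℝ) 1 | δ ≤ |lapFn x α|} < ENNReal.ofReal δ →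
      ∃ s ∈ Fset L,
        volume {α ∈ Set.Icc (0 : ℝ) 1 | ε ≤ |x α - s α|} < ENNReal.ofReal ε := by
    intro ε hε
    obtain ⟨δ, hδ, himp⟩ := HK.part1core L hL ε hε
    refine ⟨δ, hδ, ?_⟩
    intro x hx hrange hbad
    set x' : ℝ → ℝ := fun v => max 0 (min (x v) L) with hx'def
    have hx' : Measurable x' := measurable_const.max (hx.min measurable_const)
    have hr' : ∀ v, x' v ∈ Set.Icc (0:ℝ) L := fun v =>
      ⟨le_max_left _ _, max_le hL.le (min_le_right _ _)⟩
    have heq : ∀ α ∈ Set.Icc (0:ℝ) 1, x' α = x α := by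
      intro α hα
      obtain ⟨h1, h2⟩ := hrange α hα
      rw [hx'def]
      dsimp only
      rw [min_eq_left h2, max_eq_right h1]
    have hlapeq : ∀ α ∈ Set.Icc (0:ℝ) 1, lapFn x' α = lapFn x α := by
      intro α hα
      unfold lapFn
      have hchi : ∀ β ∈ Set.Icc (0:ℝ) 1, chiFn x' α β = chiFn x α β := by
        intro β hβ
        unfold chiFn
        rw [heq α hα, heq β hβ]
      have h1 : ∫ β in Set.Icc (0:ℝ) 1, chiFn x' α β
          = ∫ β in Set.Icc (0:ℝ) 1, chiFn x α β :=
        setIntegral_congr_fun measurableSet_Icc (fun β hβ => hchi β hβ)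
      have h2 : ∫ β in Set.Icc (0:ℝ) 1, chiFn x' α β * x' β
          = ∫ β in Set.Icc (0:ℝ) 1, chiFn x α β * x β :=
        setIntegral_congr_fun measurableSet_Icc
          (fun β hβ => by rw [hchi β hβ, heq β hβ])
      rw [h1, h2, heq α hα]
    have hbad' : volume {α ∈ Set.Icc (0:ℝ) 1 | δ ≤ |lapFn x' α|} < ENNReal.ofReal δ := by
      have hseteq : {α ∈ Set.Icc (0:ℝ) 1 | δ ≤ |lapFn x' α|}
          = {α ∈ Set.Icc (0:ℝ) 1 | δ ≤ |lapFn x α|} := by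
        ext α
        constructor
        · rintro ⟨hα, hle⟩; exact ⟨hα, by rwa [hlapeq α hα] at hle⟩
        · rintro ⟨hα, hle⟩; exact ⟨hα, by rwa [hlapeq α hα]⟩
      rwa [hseteq]
    obtain ⟨s, hsF, hs⟩ := himp x' hx' hr' hbad'
    refine ⟨s, hsF, ?_⟩
    have hseteq2 : {α ∈ Set.Icc (0:ℝ) 1 | ε ≤ |x α - s α|}
        = {α ∈ Set.Icc (0:ℝ) 1 | ε ≤ |x' α - s α|} := by
      ext α
      constructor
      · rintro ⟨hα, hle⟩; exact ⟨hα, by rwa [heq α hα]⟩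
      · rintro ⟨hα, hle⟩; exact ⟨hα, by rwa [heq α hα] at hle⟩
    rwa [hseteq2]
  refine ⟨part1, ?_⟩
  intro x hx hrange hae
  -- the a.e. hypothesis gives arbitrarily strong smallness hypotheses
  have hνzero : ∀ δ' : ℝ, 0 < δ' → volume {α ∈ Set.Icc (0:ℝ) 1 | δ' ≤ |lapFn x α|} = 0 := by
    intro δ' hδ'
    have h0 : (volume.restrict (Set.Icc (0:ℝ) 1)) {α | lapFn x α ≠ 0} = 0 := by
      exact ae_iff.mp hae
    have hsub : {α ∈ Set.Icc (0:ℝ) 1 | δ' ≤ |lapFn x α|}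
        ⊆ {α | lapFn x α ≠ 0} ∩ Set.Icc (0:ℝ) 1 := by
      rintro α ⟨hα, hle⟩
      refine ⟨?_, hα⟩
      intro hzero
      rw [hzero] at hle
      simp at hle
      linarith
    have h1 : volume ({α | lapFn x α ≠ 0} ∩ Set.Icc (0:ℝ) 1) = 0 := by
      rw [← Measure.restrict_apply' measurableSet_Icc]
      exact h0
    exact le_antisymm (le_trans (measure_mono hsub) (le_of_eq h1)) (zero_le)
  have hex : ∀ n : ℕ, ∃ s ∈ Fset L,
      volume {α ∈ Set.Icc (0:ℝ) 1 | 1/((n:ℝ)+1) ≤ |x α - s α|}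
        < ENNReal.ofReal (1/((n:ℝ)+1)) := by
    intro n
    have hpos : (0:ℝ) < 1/((n:ℝ)+1) := by positivity
    obtain ⟨δ, hδ, himp⟩ := part1 (1/((n:ℝ)+1)) hpos
    exact himp x hx hrange (by rw [hνzero δ hδ]; exact ENNReal.ofReal_pos.mpr hδ)
  choose sf hsF hsvol using hex
  set ν : Measure ℝ := volume.restrict (Set.Icc (0:ℝ) 1) with hνdef
  set μ : Measure ℝ := ν.map x with hμdef
  haveI : IsProbabilityMeasure ν := by
    constructor
    rw [hνdef, Measure.restrict_apply_univ]
    simp [Real.volume_Icc]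
  haveI : IsProbabilityMeasure μ := Measure.isProbabilityMeasure_map hx.aemeasurable
  set S : Set ℝ := {v | ∀ r : ℝ, 0 < r → 0 < μ (Metric.ball v r)} with hS
  -- preimage formula
  have hpre : ∀ T : Set ℝ, MeasurableSet T → μ T = volume ((x ⁻¹' T) ∩ Set.Icc (0:ℝ) 1) := by
    intro T hT
    rw [hμdef, Measure.map_apply hx hT, hνdef, Measure.restrict_apply' measurableSet_Icc]
  -- S is conull
  have hSnull : μ {v | v ∉ S} = 0 := by
    have hcov : {v | v ∉ S} ⊆ ⋃ (q : ℚ × ℚ),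
        (if μ (Metric.ball ((q.1:ℝ)) ((q.2:ℝ))) = 0
         then Metric.ball ((q.1:ℝ)) ((q.2:ℝ)) else ∅) := by
      intro v hv
      rw [hS, Set.mem_setOf_eq] at hv
      simp only [Set.mem_setOf_eq] at hv
      push_neg at hv
      obtain ⟨r, hr, hμr⟩ := hv
      have hμr0 : μ (Metric.ball v r) = 0 := le_antisymm hμr (zero_le)
      obtain ⟨q1, hq1a, hq1b⟩ := exists_rat_btwn (show v - r/4 < v by linarith)
      obtain ⟨q2, hq2a, hq2b⟩ := exists_rat_btwn (show r/4 < r/2 by linarith)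
      apply Set.mem_iUnion.mpr
      refine ⟨(q1, q2), ?_⟩
      have hsubball : Metric.ball ((q1:ℝ)) ((q2:ℝ)) ⊆ Metric.ball v r := by
        intro z hz
        rw [Metric.mem_ball, Real.dist_eq] at hz ⊢
        have h1 : |z - (q1:ℝ)| < (q2:ℝ) := hz
        have h2 : |(q1:ℝ) - v| < r/4 := by
          rw [abs_sub_comm, abs_lt]
          constructor <;> linarith
        calc |z - v| ≤ |z - (q1:ℝ)| + |(q1:ℝ) - v| := abs_sub_le _ _ _
        _ < (q2:ℝ) + r/4 := by linarith
        _ < r := by linarith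
      have hq0 : μ (Metric.ball ((q1:ℝ)) ((q2:ℝ))) = 0 :=
        le_antisymm (le_trans (measure_mono hsubball) (le_of_eq hμr0)) (zero_le)
      rw [if_pos hq0, Metric.mem_ball, Real.dist_eq]
      rw [abs_lt]
      constructor <;> linarith
    apply measure_mono_null hcov
    apply measure_iUnion_null
    intro q
    split
    · rename_i hq; exact hq
    · simp
  -- separation of S
  have hsep : ∀ u ∈ S, ∀ w ∈ S, |u - w| < 1 → u = w := by
    intro u hu w hw huw
    by_contra hne
    set d : ℝ := |u - w| with hd
    have hd0 : 0 < d := abs_pos.mpr (sub_ne_zero.mpr hne)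
    have hd1 : d < 1 := huw
    set r : ℝ := min (d/8) ((1-d)/8) with hrdef
    have hr : 0 < r := lt_min (by linarith) (by linarith)
    have hrd : r ≤ d/8 := min_le_left _ _
    have hrd1 : r ≤ (1-d)/8 := min_le_right _ _
    have hpu : 0 < μ (Metric.ball u r) := hu r hr
    have hpw : 0 < μ (Metric.ball w r) := hw r hr
    set q : ENNReal := min (μ (Metric.ball u r)) (μ (Metric.ball w r)) with hqdef
    have hq0 : 0 < q := lt_min hpu hpw
    have hqtop : q ≠ ⊤ := ne_top_of_le_ne_top (measure_ne_top μ _) (min_le_left _ _)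
    have hqT : 0 < q.toReal := ENNReal.toReal_pos hq0.ne' hqtop
    obtain ⟨n, hn⟩ := exists_nat_one_div_lt (lt_min hr hqT)
    have hnr : 1/((n:ℝ)+1) < r := lt_of_lt_of_le hn (min_le_left _ _)
    have hnq : 1/((n:ℝ)+1) < q.toReal := lt_of_lt_of_le hn (min_le_right _ _)
    have hofq : ENNReal.ofReal (1/((n:ℝ)+1)) < q := by
      have h1 : ENNReal.ofReal (1/((n:ℝ)+1)) < ENNReal.ofReal q.toReal :=
        (ENNReal.ofReal_lt_ofReal_iff hqT).mpr hnq
      rwa [ENNReal.ofReal_toReal hqtop] at h1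
    have hwitness : ∀ z : ℝ, z ∈ S → 0 < μ (Metric.ball z r) →
        q ≤ μ (Metric.ball z r) → ∃ α, α ∈ Set.Icc (0:ℝ) 1 ∧ |x α - z| < r ∧
          |x α - sf n α| < 1/((n:ℝ)+1) := by
      intro z _ _ hqz
      by_contra hnoα
      push_neg at hnoα
      have hsubbad : (x ⁻¹' Metric.ball z r) ∩ Set.Icc (0:ℝ) 1
          ⊆ {α ∈ Set.Icc (0:ℝ) 1 | 1/((n:ℝ)+1) ≤ |x α - sf n α|} := by
        rintro α ⟨hαball, hαIcc⟩
        rw [Set.mem_preimage, Metric.mem_ball, Real.dist_eq] at hαball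
        exact ⟨hαIcc, hnoα α hαIcc hαball⟩
      have hchain : μ (Metric.ball z r) < μ (Metric.ball z r) := by
        calc μ (Metric.ball z r)
            = volume ((x ⁻¹' Metric.ball z r) ∩ Set.Icc (0:ℝ) 1) :=
              hpre _ Metric.isOpen_ball.measurableSet
        _ ≤ volume {α ∈ Set.Icc (0:ℝ) 1 | 1/((n:ℝ)+1) ≤ |x α - sf n α|} :=
              measure_mono hsubbad
        _ < ENNReal.ofReal (1/((n:ℝ)+1)) := hsvol n
        _ < q := hofq
        _ ≤ μ (Metric.ball z r) := hqz
      exact absurd hchain (lt_irrefl _)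
    obtain ⟨α, hαIcc, hαball, hαnear⟩ :=
      hwitness u hu hpu (min_le_left _ _)
    obtain ⟨β, hβIcc, hβball, hβnear⟩ :=
      hwitness w hw hpw (min_le_right _ _)
    have hsep' := (hsF n).2.2 α hαIcc β hβIcc
    have t1 : |u - sf n α| < 2*r := by
      calc |u - sf n α| ≤ |u - x α| + |x α - sf n α| := abs_sub_le _ _ _
      _ < r + 1/((n:ℝ)+1) := by
            rw [abs_sub_comm]
            exact add_lt_add hαball hαnear
      _ < 2*r := by linarith
    have t2 : |w - sf n β| < 2*r := by
      calc |w - sf n β| ≤ |w - x β| + |x β - sf n β| := abs_sub_le _ _ _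
      _ < r + 1/((n:ℝ)+1) := by
            rw [abs_sub_comm]
            exact add_lt_add hβball hβnear
      _ < 2*r := by linarith
    rcases hsep' with heqc | hgec
    · -- equal values force u close to w
      have : d ≤ |u - sf n α| + |sf n β - w| := by
        calc d = |u - w| := hd
        _ ≤ |u - sf n α| + |sf n α - w| := abs_sub_le _ _ _
        _ = |u - sf n α| + |sf n β - w| := by rw [heqc]
      have h2' : |sf n β - w| < 2*r := by rw [abs_sub_comm]; exact t2
      have : d < 4*r := by linarith
      linarith [hrd]
    · -- separated values force |c - c'| < 1 contradiction
      have hcc : |sf n α - sf n β| ≤ |sf n α - u| + |u - w| + |w - sf n β| := by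
        calc |sf n α - sf n β| ≤ |sf n α - u| + |u - sf n β| := abs_sub_le _ _ _
        _ ≤ |sf n α - u| + (|u - w| + |w - sf n β|) := by
              linarith [abs_sub_le u w (sf n β)]
        _ = |sf n α - u| + |u - w| + |w - sf n β| := by ring
      have h1' : |sf n α - u| < 2*r := by rw [abs_sub_comm]; exact t1
      have : |sf n α - sf n β| < 4*r + d := by
        rw [← hd] at hcc
        linarith
      have : (1:ℝ) < 4*r + d := by linarith
      linarith [hrd1]
  -- S is contained in [0, L]
  have hμIio : μ (Set.Iio 0) = 0 := by
    rw [hpre _ measurableSet_Iio]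
    have : (x ⁻¹' Set.Iio 0) ∩ Set.Icc (0:ℝ) 1 = ∅ := by
      rw [Set.eq_empty_iff_forall_notMem]
      rintro α ⟨hneg, hαIcc⟩
      exact absurd (hrange α hαIcc).1 (not_le.mpr hneg)
    rw [this]
    simp
  have hμIoi : μ (Set.Ioi L) = 0 := by
    rw [hpre _ measurableSet_Ioi]
    have : (x ⁻¹' Set.Ioi L) ∩ Set.Icc (0:ℝ) 1 = ∅ := by
      rw [Set.eq_empty_iff_forall_notMem]
      rintro α ⟨hbig, hαIcc⟩
      exact absurd (hrange α hαIcc).2 (not_le.mpr hbig)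
    rw [this]
    simp
  have hSsub : S ⊆ Set.Icc (0:ℝ) L := by
    intro v hv
    rw [Set.mem_Icc]
    by_contra hcon
    push_neg at hcon
    rcases le_or_gt 0 v with h0 | h0
    · have hLv : L < v := hcon h0
      have hb : Metric.ball v (v - L) ⊆ Set.Ioi L := by
        intro z hz
        rw [Metric.mem_ball, Real.dist_eq, abs_lt] at hz
        rw [Set.mem_Ioi]
        linarith [hz.1]
      have hvv := hv (v - L) (by linarith)
      have hzz : μ (Metric.ball v (v - L)) = 0 :=
        le_antisymm (le_trans (measure_mono hb) (le_of_eq hμIoi)) (zero_le)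
      rw [hzz] at hvv
      exact absurd hvv (lt_irrefl _)
    · have hb : Metric.ball v (-v) ⊆ Set.Iio 0 := by
        intro z hz
        rw [Metric.mem_ball, Real.dist_eq, abs_lt] at hz
        rw [Set.mem_Iio]
        linarith [hz.2]
      have hvv := hv (-v) (by linarith)
      have hzz : μ (Metric.ball v (-v)) = 0 :=
        le_antisymm (le_trans (measure_mono hb) (le_of_eq hμIio)) (zero_le)
      rw [hzz] at hvv
      exact absurd hvv (lt_irrefl _)
  -- S is finite and nonempty
  have hSfin : S.Finite := by
    apply Set.Finite.of_finite_image (f := fun v => ⌊v⌋₊)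
    · apply Set.Finite.subset (Set.finite_Iic ⌊L⌋₊)
      rintro _ ⟨v, hv, rfl⟩
      exact Set.mem_Iic.mpr (Nat.floor_le_floor (hSsub hv).2)
    · intro u hu w hw hfl
      simp only at hfl
      have h0u : 0 ≤ u := (hSsub hu).1
      have h0w : 0 ≤ w := (hSsub hw).1
      have h1u : (⌊u⌋₊:ℝ) ≤ u := Nat.floor_le h0u
      have h2u : u < (⌊u⌋₊:ℝ) + 1 := Nat.lt_floor_add_one u
      have h1w : (⌊w⌋₊:ℝ) ≤ w := Nat.floor_le h0w
      have h2w : w < (⌊w⌋₊:ℝ) + 1 := Nat.lt_floor_add_one w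
      have hflR : ((⌊u⌋₊:ℕ):ℝ) = ((⌊w⌋₊:ℕ):ℝ) := by exact_mod_cast hfl
      apply hsep u hu w hw
      rw [abs_lt]
      constructor <;> linarith
  have hSne : S.Nonempty := by
    by_contra hne
    rw [Set.not_nonempty_iff_eq_empty] at hne
    have huniv : {v : ℝ | v ∉ S} = Set.univ := by
      rw [Set.eq_univ_iff_forall]
      intro v
      rw [Set.mem_setOf_eq, hne]
      exact Set.notMem_empty v
    have h1 : μ Set.univ = 0 := by rw [← huniv]; exact hSnull
    rw [measure_univ] at h1
    exact one_ne_zero h1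
  set D : Finset ℝ := hSfin.toFinset with hD
  have hDne : D.Nonempty := by
    rwa [hD, Set.Finite.toFinset_nonempty]
  have hDS : ∀ d, d ∈ D ↔ d ∈ S := fun d => Set.Finite.mem_toFinset hSfin
  -- the step function
  set g : ℝ → ℝ := fun v =>
    if hnon : (D.filter (fun d => d ≤ v)).Nonempty
    then (D.filter (fun d => d ≤ v)).max' hnon else D.min' hDne with hg
  have hgD : ∀ v, g v ∈ D := by
    intro v
    rw [hg]
    dsimp only
    split
    · rename_i hnon
      exact Finset.mem_of_mem_filter _ ((D.filter _).max'_mem hnon)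
    · exact D.min'_mem hDne
  have hgmono : Monotone g := by
    intro v v' hvv'
    have hsubf : D.filter (fun d => d ≤ v) ⊆ D.filter (fun d => d ≤ v') := by
      intro z hz
      rw [Finset.mem_filter] at hz ⊢
      exact ⟨hz.1, le_trans hz.2 hvv'⟩
    rw [hg]
    dsimp only
    split
    · rename_i hnon
      have hnon' : (D.filter (fun d => d ≤ v')).Nonempty := by
        obtain ⟨z, hz⟩ := hnon
        exact ⟨z, hsubf hz⟩
      rw [dif_pos hnon']
      exact Finset.max'_subset _ hsubf
    · split
      · rename_i hnon'
        apply Finset.min'_le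
        exact Finset.mem_of_mem_filter _ ((D.filter _).max'_mem hnon')
      · exact le_refl _
  have hgfix : ∀ v, v ∈ D → g v = v := by
    intro v hv
    have hvf : v ∈ D.filter (fun d => d ≤ v) := Finset.mem_filter.mpr ⟨hv, le_refl v⟩
    have hnon : (D.filter (fun d => d ≤ v)).Nonempty := ⟨v, hvf⟩
    rw [hg]
    dsimp only
    rw [dif_pos hnon]
    apply le_antisymm
    · exact Finset.max'_le _ _ _ (fun z hz => (Finset.mem_filter.mp hz).2)
    · exact Finset.le_max' _ v hvf
  refine ⟨fun α => g (x α), ⟨(hgmono.measurable).comp hx, ?_, ?_⟩, ?_⟩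
  · intro α _
    exact hSsub ((hDS _).mp (hgD (x α)))
  · intro α _ β _
    have hcα : g (x α) ∈ S := (hDS _).mp (hgD (x α))
    have hcβ : g (x β) ∈ S := (hDS _).mp (hgD (x β))
    by_cases hlt : |g (x α) - g (x β)| < 1
    · exact Or.inl (hsep _ hcα _ hcβ hlt)
    · exact Or.inr (not_lt.mp hlt)
  · -- a.e. equality
    have hcompl_meas : MeasurableSet Sᶜ := hSfin.measurableSet.compl
    have hνpre : ν {α | x α ∉ S} = 0 := by
      have h2 : μ Sᶜ = 0 := hSnull
      rw [hμdef, Measure.map_apply hx hcompl_meas] at h2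
      exact h2
    rw [ae_iff]
    apply measure_mono_null ?_ hνpre
    intro α hα
    rw [Set.mem_setOf_eq] at hα ⊢
    intro hxα
    exact hα (hgfix (x α) ((hDS _).mpr hxα)).symm
end
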